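/- arXiv:2406.11990 — 7 statements merged into one kernel-verified Lean document; each statement's English description precedes it below -/
import Mathlib

section
/- For α, β ∈ R_Θ one has U(X_α, X_β) = (n_{α,β}/(2 λ_{α+β})) (λ_β − λ_α) X_{α+β} if α + β ∈ R_Θ, and U(X_α, X_β) = 0 otherwise. In particular, 2 g(U(X_α, X_β), X_{−γ}) = n_{α,β} (λ_β − λ_α) when γ = α + β ∈ R_Θ, and 2 g(U(X_α, X_β), X_{−γ}) = 0 for every other γ ∈ R_Θ. -/
/- STATEMENT 6:
For α, β ∈ R_Θ one has U(X_α, X_β) = (n_{α,β}/(2 λ_{α+β})) (λ_β − λ_α) X_{α+β}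
if α + β ∈ R_Θ, and U(X_α, X_β) = 0 otherwise.  In particular,
2 g(U(X_α, X_β), X_{−γ}) = n_{α,β} (λ_β − λ_α) when γ = α + β ∈ R_Θ, and
2 g(U(X_α, X_β), X_{−γ}) = 0 for every other γ ∈ R_Θ.

Context: 𝔤 complex semisimple with Weyl basis {X_α, H_α} and real structure
constants n_{α,β}; Θ ⊆ Σ, R(Θ) = ⟨Θ⟩ ∩ R, R_Θ = R ∖ R(Θ) (here `RΘc`);
𝔪^ℂ = ⨁_{α∈R_Θ} 𝔤_α with projection π_𝔪; λ : R_Θ → ℝ_{>0} with λ_{−α} = λ_α;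
g the symmetric bilinear form with g(X_α, X_β) = λ_α δ_{β,−α} (nondegenerate
on 𝔪^ℂ); U the unique symmetric bilinear map on 𝔪^ℂ with
2 g(U(X,Y), Z) = g(π_𝔪[Z,X], Y) + g(X, π_𝔪[Z,Y]). -/
theorem stmt6
    (L : Type*) [LieRing L] [LieAlgebra ℂ L]
    (V : Type*) [AddCommGroup V] [DecidableEq V]
    (R : Finset V) (hR0 : (0 : V) ∉ R) (hRneg : ∀ α ∈ R, -α ∈ R)
    (Rpos : Finset V) (hposR : Rpos ⊆ R)
    (hposneg : ∀ α ∈ R, α ∈ Rpos ↔ -α ∉ Rpos)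
    (Sig : Finset V) (hSigpos : Sig ⊆ Rpos)
    (Θ : Finset V) (hΘSig : Θ ⊆ Sig)
    (RΘ : Finset V)
    (hRΘ : ∀ α, α ∈ RΘ ↔ α ∈ R ∧ α ∈ AddSubgroup.closure (Θ : Set V))
    (RΘc : Finset V) (hRΘc : ∀ α, α ∈ RΘc ↔ α ∈ R ∧ α ∉ RΘ)
    (X H : V → L) (n : V → V → ℝ)
    (hbH : ∀ α ∈ R, ⁅X α, X (-α)⁆ = H α)
    (hbR : ∀ α ∈ R, ∀ β ∈ R, α + β ∈ R → ⁅X α, X β⁆ = (n α β : ℂ) • X (α + β))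
    (hb0 : ∀ α ∈ R, ∀ β ∈ R, α + β ∉ R → α + β ≠ 0 → ⁅X α, X β⁆ = (0 : L))
    (hn1 : ∀ α β : V, n α β = - n β α)
    (hn2 : ∀ α β : V, n α β = - n (-α) (-β))
    (hn3 : ∀ α β γ : V, α + β + γ = 0 → n α β = n β γ ∧ n β γ = n γ α)
    (πm : L →ₗ[ℂ] L)
    (hπm1 : ∀ α ∈ RΘc, πm (X α) = X α)
    (hπm2 : ∀ α ∈ RΘ, πm (X α) = 0)
    (hπm3 : ∀ α ∈ R, πm (H α) = 0)
    (lam : V → ℝ) (hlam1 : ∀ α ∈ RΘc, 0 < lam α) (hlam2 : ∀ α : V, lam (-α) = lam α)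
    (g : L →ₗ[ℂ] L →ₗ[ℂ] ℂ) (hgsym : ∀ x y : L, g x y = g y x)
    (hg : ∀ α ∈ RΘc, ∀ β ∈ RΘc, g (X α) (X β) = if β = -α then (lam α : ℂ) else 0)
    (hgnd : ∀ x ∈ Submodule.span ℂ (X '' (RΘc : Set V)),
      (∀ z ∈ Submodule.span ℂ (X '' (RΘc : Set V)), g x z = 0) → x = 0)
    (U : L →ₗ[ℂ] L →ₗ[ℂ] L) (hUsym : ∀ x y : L, U x y = U y x)
    (hUmem : ∀ x y : L, U x y ∈ Submodule.span ℂ (X '' (RΘc : Set V)))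
    (hU : ∀ x ∈ Submodule.span ℂ (X '' (RΘc : Set V)),
          ∀ y ∈ Submodule.span ℂ (X '' (RΘc : Set V)),
          ∀ z ∈ Submodule.span ℂ (X '' (RΘc : Set V)),
      (2 : ℂ) * g (U x y) z = g (πm ⁅z, x⁆) y + g x (πm ⁅z, y⁆))
    :
    ∀ α ∈ RΘc, ∀ β ∈ RΘc,
      ((α + β ∈ RΘc →
          U (X α) (X β)
            = ((n α β / (2 * lam (α + β)) * (lam β - lam α) : ℝ) : ℂ) • X (α + β)) ∧
       (α + β ∉ RΘc → U (X α) (X β) = 0)) ∧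
      ∀ γ ∈ RΘc,
        (γ = α + β → (2 : ℂ) * g (U (X α) (X β)) (X (-γ))
            = ((n α β * (lam β - lam α) : ℝ) : ℂ)) ∧
        (γ ≠ α + β → (2 : ℂ) * g (U (X α) (X β)) (X (-γ)) = 0) := by

  classical
  set M := Submodule.span ℂ (X '' (RΘc : Set V)) with hM
  have hmem : ∀ {δ : V}, δ ∈ RΘc → X δ ∈ M := fun {δ} hδ =>
    Submodule.subset_span ⟨δ, Finset.mem_coe.mpr hδ, rfl⟩
  have hRc : ∀ {δ : V}, δ ∈ RΘc → δ ∈ R := fun {δ} hδ => ((hRΘc δ).mp hδ).1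
  have hnegc : ∀ {δ : V}, δ ∈ RΘc → -δ ∈ RΘc := by
    intro δ hδ
    rcases (hRΘc δ).mp hδ with ⟨hδR, hδn⟩
    refine (hRΘc _).mpr ⟨hRneg δ hδR, fun hmm => hδn ?_⟩
    rcases (hRΘ _).mp hmm with ⟨_, hcl⟩
    exact (hRΘ δ).mpr ⟨hδR, by simpa using neg_mem hcl⟩
  have hterm : ∀ α ∈ RΘc, ∀ β ∈ RΘc, ∀ γ ∈ RΘc,
      g (πm ⁅X (-γ), X α⁆) (X β)
        = if γ = α + β then ((n (-γ) α * lam β : ℝ) : ℂ) else 0 := by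
    intro α hα β hβ γ hγ
    by_cases hc : γ = α + β
    · subst hc
      have h1 : -(α + β) + α = -β := by abel
      have hb := hbR (-(α + β)) (hRneg _ (hRc hγ)) α (hRc hα)
        (by rw [h1]; exact hRneg _ (hRc hβ))
      rw [hb, h1, map_smul, hπm1 _ (hnegc hβ), map_smul, LinearMap.smul_apply,
        hg _ (hnegc hβ) _ hβ, if_pos (neg_neg β).symm, if_pos rfl]
      rw [smul_eq_mul, hlam2]
      push_cast
      ring
    · rw [if_neg hc]
      by_cases h0 : -γ + α = 0
      · have hα' : α = γ := by
          have h0' : α - γ = 0 := by rw [← h0]; abel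
          exact sub_eq_zero.mp h0'
        subst hα'
        have hb : ⁅X (-α), X α⁆ = H (-α) := by
          have := hbH (-α) (hRneg _ (hRc hα))
          rwa [neg_neg] at this
        rw [hb, hπm3 _ (hRneg _ (hRc hα))]
        simp
      · by_cases h2 : -γ + α ∈ R
        · rw [hbR (-γ) (hRneg _ (hRc hγ)) α (hRc hα) h2, map_smul]
          by_cases h3 : -γ + α ∈ RΘ
          · rw [hπm2 _ h3]
            simp
          · have h4 : -γ + α ∈ RΘc := (hRΘc _).mpr ⟨h2, h3⟩
            rw [hπm1 _ h4, map_smul, LinearMap.smul_apply, hg _ h4 _ hβ,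
              if_neg (fun heq : β = -(-γ + α) => hc (by rw [heq]; abel))]
            simp
        · rw [hb0 (-γ) (hRneg _ (hRc hγ)) α (hRc hα) h2 h0]
          simp
  have hkey : ∀ α ∈ RΘc, ∀ β ∈ RΘc, ∀ γ ∈ RΘc,
      (2 : ℂ) * g (U (X α) (X β)) (X (-γ))
        = if γ = α + β then ((n α β * (lam β - lam α) : ℝ) : ℂ) else 0 := by
    intro α hα β hβ γ hγ
    rw [hU (X α) (hmem hα) (X β) (hmem hβ) (X (-γ)) (hmem (hnegc hγ)),
      hterm α hα β hβ γ hγ, hgsym, hterm β hβ α hα γ hγ]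
    by_cases hc : γ = α + β
    · rw [if_pos hc, if_pos (by rw [hc, add_comm]), if_pos hc]
      have h3 := hn3 (-γ) α β (by rw [hc]; abel)
      have h4 : n (-γ) β = - n α β := by rw [hn1 (-γ) β, ← h3.2]
      rw [h3.1, h4]
      push_cast
      ring
    · rw [if_neg hc, if_neg (fun h => hc (by rw [h, add_comm])), if_neg hc]
      ring
  have huniq : ∀ w ∈ M, (∀ δ ∈ RΘc, g w (X δ) = 0) → w = 0 := by
    intro w hw h
    refine hgnd w hw ?_
    intro z hz
    have hle : M ≤ LinearMap.ker (g w) := by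
      rw [hM, Submodule.span_le]
      rintro _ ⟨δ, hδ, rfl⟩
      exact LinearMap.mem_ker.mpr (h δ (Finset.mem_coe.mp hδ))
    exact hle hz
  intro α hα β hβ
  refine ⟨⟨?_, ?_⟩, ?_⟩
  · intro hab
    have hlamne : ((lam (α + β) : ℂ)) ≠ 0 := by
      exact_mod_cast (hlam1 _ hab).ne'
    have hgU : ∀ δ ∈ RΘc,
        g (U (X α) (X β)
          - ((n α β / (2 * lam (α + β)) * (lam β - lam α) : ℝ) : ℂ) • X (α + β)) (X δ)
          = 0 := by
      intro δ hδ
      have hk := hkey α hα β hβ (-δ) (hnegc hδ)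
      rw [neg_neg] at hk
      rw [map_sub, LinearMap.sub_apply, map_smul, LinearMap.smul_apply,
        hg _ hab _ hδ]
      by_cases hd : -δ = α + β
      · rw [if_pos hd] at hk
        rw [if_pos (by rw [← hd, neg_neg])]
        have hg2 : g (U (X α) (X β)) (X δ)
            = ((n α β * (lam β - lam α) : ℝ) : ℂ) / 2 := by
          push_cast at hk ⊢
          linear_combination hk / 2
        rw [hg2, smul_eq_mul, sub_eq_zero]
        push_cast
        field_simp
      · rw [if_neg hd] at hk
        rw [if_neg (fun heq : δ = -(α + β) => hd (by rw [heq, neg_neg]))]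
        have : g (U (X α) (X β)) (X δ) = 0 :=
          (mul_eq_zero.mp hk).resolve_left two_ne_zero
        rw [this]
        simp
    have hsub := huniq _ (Submodule.sub_mem _ (hUmem _ _)
      (Submodule.smul_mem _ _ (hmem hab))) hgU
    rwa [sub_eq_zero] at hsub
  · intro hab
    refine huniq _ (hUmem _ _) ?_
    intro δ hδ
    have hk := hkey α hα β hβ (-δ) (hnegc hδ)
    rw [neg_neg, if_neg (fun h : -δ = α + β => hab (h ▸ hnegc hδ))] at hk
    exact (mul_eq_zero.mp hk).resolve_left two_ne_zero
  · intro γ hγ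
    constructor
    · intro h
      have hk := hkey α hα β hβ γ hγ
      rwa [if_pos h] at hk
    · intro h
      have hk := hkey α hα β hβ γ hγ
      rwa [if_neg h] at hk
end

section
/- For α, β ∈ R_Θ one has ∇(X_α, X_β) := −(1/2) π_𝔪[X_α, X_β] + U(X_α, X_β) = r_{α,β} X_{α+β} if α + β ∈ R_Θ, where r_{α,β} = (n_{β,α}/(2 λ_{α+β})) (λ_{α+β} + λ_α − λ_β), and ∇(X_α, X_β) = 0 otherwise. -/
/- STATEMENT 7:
For α, β ∈ R_Θ one has
∇(X_α, X_β) := −(1/2) π_𝔪[X_α, X_β] + U(X_α, X_β) = r_{α,β} X_{α+β}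
if α + β ∈ R_Θ, where r_{α,β} = (n_{β,α}/(2 λ_{α+β})) (λ_{α+β} + λ_α − λ_β),
and ∇(X_α, X_β) = 0 otherwise.

Context: as in the paper, 𝔤 complex semisimple with Weyl basis {X_α, H_α},
real structure constants n_{α,β}; Θ ⊆ Σ, R(Θ) = ⟨Θ⟩ ∩ R, R_Θ = R ∖ R(Θ)
(here `RΘc`); 𝔪^ℂ = ⨁_{α∈R_Θ} 𝔤_α with projection π_𝔪; λ : R_Θ → ℝ_{>0}
with λ_{−α} = λ_α; g with g(X_α, X_β) = λ_α δ_{β,−α}, nondegenerate on 𝔪^ℂ;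
U the unique symmetric bilinear map with
2 g(U(X,Y), Z) = g(π_𝔪[Z,X], Y) + g(X, π_𝔪[Z,Y]). -/
theorem stmt7
    (L : Type*) [LieRing L] [LieAlgebra ℂ L]
    (V : Type*) [AddCommGroup V] [DecidableEq V]
    (R : Finset V) (hR0 : (0 : V) ∉ R) (hRneg : ∀ α ∈ R, -α ∈ R)
    (Rpos : Finset V) (hposR : Rpos ⊆ R)
    (hposneg : ∀ α ∈ R, α ∈ Rpos ↔ -α ∉ Rpos)
    (Sig : Finset V) (hSigpos : Sig ⊆ Rpos)
    (Θ : Finset V) (hΘSig : Θ ⊆ Sig)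
    (RΘ : Finset V)
    (hRΘ : ∀ α, α ∈ RΘ ↔ α ∈ R ∧ α ∈ AddSubgroup.closure (Θ : Set V))
    (RΘc : Finset V) (hRΘc : ∀ α, α ∈ RΘc ↔ α ∈ R ∧ α ∉ RΘ)
    (X H : V → L) (n : V → V → ℝ)
    (hbH : ∀ α ∈ R, ⁅X α, X (-α)⁆ = H α)
    (hbR : ∀ α ∈ R, ∀ β ∈ R, α + β ∈ R → ⁅X α, X β⁆ = (n α β : ℂ) • X (α + β))
    (hb0 : ∀ α ∈ R, ∀ β ∈ R, α + β ∉ R → α + β ≠ 0 → ⁅X α, X β⁆ = (0 : L))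
    (hn1 : ∀ α β : V, n α β = - n β α)
    (hn2 : ∀ α β : V, n α β = - n (-α) (-β))
    (hn3 : ∀ α β γ : V, α + β + γ = 0 → n α β = n β γ ∧ n β γ = n γ α)
    (πm : L →ₗ[ℂ] L)
    (hπm1 : ∀ α ∈ RΘc, πm (X α) = X α)
    (hπm2 : ∀ α ∈ RΘ, πm (X α) = 0)
    (hπm3 : ∀ α ∈ R, πm (H α) = 0)
    (lam : V → ℝ) (hlam1 : ∀ α ∈ RΘc, 0 < lam α) (hlam2 : ∀ α : V, lam (-α) = lam α)
    (g : L →ₗ[ℂ] L →ₗ[ℂ] ℂ) (hgsym : ∀ x y : L, g x y = g y x)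
    (hg : ∀ α ∈ RΘc, ∀ β ∈ RΘc, g (X α) (X β) = if β = -α then (lam α : ℂ) else 0)
    (hgnd : ∀ x ∈ Submodule.span ℂ (X '' (RΘc : Set V)),
      (∀ z ∈ Submodule.span ℂ (X '' (RΘc : Set V)), g x z = 0) → x = 0)
    (U : L →ₗ[ℂ] L →ₗ[ℂ] L) (hUsym : ∀ x y : L, U x y = U y x)
    (hUmem : ∀ x y : L, U x y ∈ Submodule.span ℂ (X '' (RΘc : Set V)))
    (hU : ∀ x ∈ Submodule.span ℂ (X '' (RΘc : Set V)),
          ∀ y ∈ Submodule.span ℂ (X '' (RΘc : Set V)),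
          ∀ z ∈ Submodule.span ℂ (X '' (RΘc : Set V)),
      (2 : ℂ) * g (U x y) z = g (πm ⁅z, x⁆) y + g x (πm ⁅z, y⁆))
    :
    ∀ α ∈ RΘc, ∀ β ∈ RΘc,
      (α + β ∈ RΘc →
        -(1/2 : ℂ) • πm ⁅X α, X β⁆ + U (X α) (X β)
          = ((n β α / (2 * lam (α + β)) * (lam (α + β) + lam α - lam β) : ℝ) : ℂ)
              • X (α + β)) ∧
      (α + β ∉ RΘc →
        -(1/2 : ℂ) • πm ⁅X α, X β⁆ + U (X α) (X β) = 0) := by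
  classical
  set S : Set L := X '' (RΘc : Set V) with hSdef
  have hXmem : ∀ γ ∈ RΘc, X γ ∈ Submodule.span ℂ S := fun γ hγ =>
    Submodule.subset_span ⟨γ, hγ, rfl⟩
  have hRcR : ∀ α ∈ RΘc, α ∈ R := fun α hα => ((hRΘc α).1 hα).1
  have hRc_ne0 : ∀ α ∈ RΘc, α ≠ 0 := fun α hα h => hR0 (h ▸ hRcR α hα)
  have hRc_neg : ∀ α ∈ RΘc, -α ∈ RΘc := by
    intro α hα
    obtain ⟨hαR, hαn⟩ := (hRΘc α).1 hα
    refine (hRΘc (-α)).2 ⟨hRneg α hαR, fun h => hαn ((hRΘ α).2 ⟨hαR, ?_⟩)⟩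
    obtain ⟨-, h2⟩ := (hRΘ (-α)).1 h
    simpa using neg_mem h2
  -- uniqueness from nondegeneracy
  have huniq : ∀ u ∈ Submodule.span ℂ S, ∀ w ∈ Submodule.span ℂ S,
      (∀ γ ∈ RΘc, g u (X γ) = g w (X γ)) → u = w := by
    intro u hu w hw h
    have hker : Submodule.span ℂ S ≤ LinearMap.ker (g u - g w) := by
      rw [Submodule.span_le]
      rintro _ ⟨γ, hγ, rfl⟩
      simp [LinearMap.mem_ker, h γ hγ]
    have hz : ∀ z ∈ Submodule.span ℂ S, g (u - w) z = 0 := by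
      intro z hz
      have := hker hz
      rw [LinearMap.mem_ker, LinearMap.sub_apply] at this
      rw [map_sub, LinearMap.sub_apply]
      exact this
    exact sub_eq_zero.mp (hgnd _ (Submodule.sub_mem _ hu hw) hz)
  -- key computation
  have key : ∀ α ∈ RΘc, ∀ β ∈ RΘc, ∀ γ ∈ RΘc,
      g (πm ⁅X γ, X α⁆) (X β)
        = if γ = -(α + β) then ((n γ α * lam β : ℝ) : ℂ) else 0 := by
    intro α hα β hβ γ hγ
    by_cases h1 : γ + α ∈ R
    · rw [hbR γ (hRcR γ hγ) α (hRcR α hα) h1, map_smul, map_smul]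
      by_cases h2 : γ + α ∈ RΘ
      · rw [hπm2 _ h2]
        have hne : γ ≠ -(α + β) := by
          intro h
          have he : γ + α = -β := by rw [h]; abel
          exact ((hRΘc (-β)).1 (hRc_neg β hβ)).2 (he ▸ h2)
        simp only [smul_zero, map_zero, LinearMap.zero_apply, LinearMap.smul_apply,
          mul_zero, smul_eq_mul]
        rw [if_neg hne]
      · have hc : γ + α ∈ RΘc := (hRΘc _).2 ⟨h1, h2⟩
        rw [hπm1 _ hc, LinearMap.smul_apply, hg _ hc _ hβ]
        by_cases h : γ = -(α + β)
        · have e1 : γ + α = -β := by rw [h]; abel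
          have e2 : β = -(γ + α) := by rw [e1, neg_neg]
          rw [if_pos h, if_pos e2, e1, hlam2]
          push_cast
          rw [smul_eq_mul]
        · have e2 : β ≠ -(γ + α) := by
            intro he
            apply h
            rw [he]; abel
          rw [if_neg h, if_neg e2, smul_zero]
    · by_cases h0 : γ + α = 0
      · have hα' : -γ = α := neg_eq_of_add_eq_zero_right h0
        have hne : γ ≠ -(α + β) := by
          intro h
          apply hRc_ne0 β hβ
          have : γ + α + β = 0 := by rw [h]; abel
          rw [h0] at this; simpa using this
        have hb : ⁅X γ, X α⁆ = H γ := by rw [← hα']; exact hbH γ (hRcR γ hγ)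
        rw [hb, hπm3 γ (hRcR γ hγ), map_zero, LinearMap.zero_apply, if_neg hne]
      · have hne : γ ≠ -(α + β) := by
          intro h
          apply h1
          have he : γ + α = -β := by rw [h]; abel
          rw [he]
          exact hRneg β (hRcR β hβ)
        rw [hb0 γ (hRcR γ hγ) α (hRcR α hα) h1 h0, map_zero, map_zero,
          LinearMap.zero_apply, if_neg hne]
  intro α hα β hβ
  constructor
  · -- case α + β ∈ RΘc
    intro hab
    have hδR : α + β ∈ R := hRcR _ hab
    have hlpos : 0 < lam (α + β) := hlam1 _ hab
    set c : ℝ := n β α * (lam α - lam β) / (2 * lam (α + β)) with hc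
    have hUeq : U (X α) (X β) = (c : ℂ) • X (α + β) := by
      refine huniq _ (hUmem _ _) _ (Submodule.smul_mem _ _ (hXmem _ hab)) ?_
      intro γ hγ
      have h2g := hU (X α) (hXmem α hα) (X β) (hXmem β hβ) (X γ) (hXmem γ hγ)
      rw [key α hα β hβ γ hγ, hgsym (X α), key β hβ α hα γ hγ] at h2g
      have hcomm : -(β + α) = -(α + β) := by abel
      rw [hcomm] at h2g
      refine mul_left_cancel₀ ((by norm_num : (2:ℂ) ≠ 0)) ?_
      rw [h2g, map_smul, LinearMap.smul_apply, hg _ hab _ hγ]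
      by_cases h : γ = -(α + β)
      · have h1 : α + β + γ = 0 := by rw [h]; abel
        have h2 : γ + β + α = 0 := by rw [h]; abel
        obtain ⟨e1, e2⟩ := hn3 α β γ h1
        obtain ⟨e3, -⟩ := hn3 γ β α h2
        have hγα : n γ α = - n β α := by rw [← e2, ← e1, hn1]
        have hreal : n γ α * lam β + n γ β * lam α = 2 * c * lam (α + β) := by
          rw [hγα, e3, hc]
          field_simp
          ring
        rw [if_pos h, if_pos h, if_pos h, smul_eq_mul, ← mul_assoc]
        exact_mod_cast hreal
      · rw [if_neg h, if_neg h, if_neg h, smul_zero, mul_zero, add_zero]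
    rw [hbR α (hRcR α hα) β (hRcR β hβ) hδR, map_smul, hπm1 _ hab, hUeq,
      smul_smul, ← add_smul]
    congr 1
    have hreal : -(1/2) * n α β + c = n β α / (2 * lam (α + β)) * (lam (α + β) + lam α - lam β) := by
      rw [hn1 α β, hc]
      field_simp
      ring
    push_cast [← hreal]
    ring
  · -- case α + β ∉ RΘc
    intro hab
    have hU0 : U (X α) (X β) = 0 := by
      refine huniq _ (hUmem _ _) 0 (zero_mem _) ?_
      intro γ hγ
      have h2g := hU (X α) (hXmem α hα) (X β) (hXmem β hβ) (X γ) (hXmem γ hγ)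
      rw [key α hα β hβ γ hγ, hgsym (X α), key β hβ α hα γ hγ] at h2g
      have hne : γ ≠ -(α + β) := by
        intro h
        apply hab
        have : -γ = α + β := by rw [h, neg_neg]
        exact this ▸ hRc_neg γ hγ
      have hne2 : γ ≠ -(β + α) := by
        intro h; apply hne; rw [h]; abel
      rw [if_neg hne, if_neg hne2, add_zero] at h2g
      simp only [map_zero, LinearMap.zero_apply]
      exact mul_left_cancel₀ ((by norm_num : (2:ℂ) ≠ 0)) (by rw [h2g]; ring)
    have hπ0 : πm ⁅X α, X β⁆ = 0 := by
      by_cases h1 : α + β ∈ R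
      · have h2 : α + β ∈ RΘ := by
          by_contra h2
          exact hab ((hRΘc _).2 ⟨h1, h2⟩)
        rw [hbR α (hRcR α hα) β (hRcR β hβ) h1, map_smul, hπm2 _ h2, smul_zero]
      · by_cases h0 : α + β = 0
        · have hβα : -α = β := neg_eq_of_add_eq_zero_right h0
          rw [← hβα, hbH α (hRcR α hα), hπm3 α (hRcR α hα)]
        · rw [hb0 α (hRcR α hα) β (hRcR β hβ) h1 h0, map_zero]
    rw [hπ0, hU0, smul_zero, add_zero]
end

section
/- For every β ∈ R_Θ⁺ and every X ∈ 𝔪^ℂ one has (∇_{V_β} Ω)(V_β, X) = 0 and (∇_{J V_β} Ω)(J V_β, X) = 0. -/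
/- STATEMENT 12 (Theorem on the covariant derivative of the Kähler form):
For every β ∈ R_Θ⁺ and every X ∈ 𝔪^ℂ one has (∇_{V_β} Ω)(V_β, X) = 0 and
(∇_{J V_β} Ω)(J V_β, X) = 0.

Context: the invariant almost Hermitian flag manifold setup: Weyl basis
{X_α, H_α} with structure constants n_{α,β}; Θ ⊆ Σ, R(Θ) = ⟨Θ⟩ ∩ R,
R_Θ = R ∖ R(Θ) (here `RΘc`), R_Θ⁺ = R_Θ ∩ R⁺ (here `Rcpos`);
𝔪^ℂ = ⨁_{α∈R_Θ} 𝔤_α with projection π_𝔪; metric data λ, g; U and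
∇(X,Y) = −(1/2) π_𝔪[X,Y] + U(X,Y); invariant almost complex structure
J X_α = i ε_α X_α; A_α = X_α − X_{−α}, V_α = A_α/√(2λ_α);
Ω(X,Y) = g(X, JY) and (∇_X Ω)(Y,Z) = g(Y, ∇(X, JZ) − J ∇(X, Z)). -/
theorem stmt12
    (L : Type*) [LieRing L] [LieAlgebra ℂ L]
    (V : Type*) [AddCommGroup V] [DecidableEq V]
    (R : Finset V) (hR0 : (0 : V) ∉ R) (hRneg : ∀ α ∈ R, -α ∈ R)
    (Rpos : Finset V) (hposR : Rpos ⊆ R)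
    (hposneg : ∀ α ∈ R, α ∈ Rpos ↔ -α ∉ Rpos)
    (Sig : Finset V) (hSigpos : Sig ⊆ Rpos)
    (Θ : Finset V) (hΘSig : Θ ⊆ Sig)
    (RΘ : Finset V)
    (hRΘ : ∀ α, α ∈ RΘ ↔ α ∈ R ∧ α ∈ AddSubgroup.closure (Θ : Set V))
    (RΘc : Finset V) (hRΘc : ∀ α, α ∈ RΘc ↔ α ∈ R ∧ α ∉ RΘ)
    (X H : V → L) (n : V → V → ℝ)
    (hbH : ∀ α ∈ R, ⁅X α, X (-α)⁆ = H α)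
    (hbR : ∀ α ∈ R, ∀ β ∈ R, α + β ∈ R → ⁅X α, X β⁆ = (n α β : ℂ) • X (α + β))
    (hb0 : ∀ α ∈ R, ∀ β ∈ R, α + β ∉ R → α + β ≠ 0 → ⁅X α, X β⁆ = (0 : L))
    (hn1 : ∀ α β : V, n α β = - n β α)
    (hn2 : ∀ α β : V, n α β = - n (-α) (-β))
    (hn3 : ∀ α β γ : V, α + β + γ = 0 → n α β = n β γ ∧ n β γ = n γ α)
    (πm : L →ₗ[ℂ] L)
    (hπm1 : ∀ α ∈ RΘc, πm (X α) = X α)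
    (hπm2 : ∀ α ∈ RΘ, πm (X α) = 0)
    (hπm3 : ∀ α ∈ R, πm (H α) = 0)
    (lam : V → ℝ) (hlam1 : ∀ α ∈ RΘc, 0 < lam α) (hlam2 : ∀ α : V, lam (-α) = lam α)
    (g : L →ₗ[ℂ] L →ₗ[ℂ] ℂ) (hgsym : ∀ x y : L, g x y = g y x)
    (hg : ∀ α ∈ RΘc, ∀ β ∈ RΘc, g (X α) (X β) = if β = -α then (lam α : ℂ) else 0)
    (hgnd : ∀ x ∈ Submodule.span ℂ (X '' (RΘc : Set V)),
      (∀ z ∈ Submodule.span ℂ (X '' (RΘc : Set V)), g x z = 0) → x = 0)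
    (U : L →ₗ[ℂ] L →ₗ[ℂ] L) (hUsym : ∀ x y : L, U x y = U y x)
    (hUmem : ∀ x y : L, U x y ∈ Submodule.span ℂ (X '' (RΘc : Set V)))
    (hU : ∀ x ∈ Submodule.span ℂ (X '' (RΘc : Set V)),
          ∀ y ∈ Submodule.span ℂ (X '' (RΘc : Set V)),
          ∀ z ∈ Submodule.span ℂ (X '' (RΘc : Set V)),
      (2 : ℂ) * g (U x y) z = g (πm ⁅z, x⁆) y + g x (πm ⁅z, y⁆))
    (eps : V → ℝ) (heps1 : ∀ α ∈ RΘc, eps α = 1 ∨ eps α = -1)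
    (heps2 : ∀ α : V, eps (-α) = - eps α)
    (J : L →ₗ[ℂ] L)
    (hJ : ∀ α ∈ RΘc, J (X α) = (Complex.I * (eps α : ℂ)) • X α)
    (nab : L → L → L)
    (hnab : ∀ x y : L, nab x y = -(1/2 : ℂ) • πm ⁅x, y⁆ + U x y)
    (covOm : L → L → L → ℂ)
    (hcovOm : ∀ x y z : L, covOm x y z = g y (nab x (J z) - J (nab x z)))
    (Rcpos : Finset V) (hRcpos : ∀ α, α ∈ Rcpos ↔ α ∈ RΘc ∧ α ∈ Rpos)
    (Vv : V → L)
    (hVv : ∀ α : V, Vv α = (((Real.sqrt (2 * lam α))⁻¹ : ℝ) : ℂ) • (X α - X (-α)))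
    :
    ∀ β ∈ Rcpos, ∀ x ∈ Submodule.span ℂ (X '' (RΘc : Set V)),
      covOm (Vv β) (Vv β) x = 0 ∧ covOm (J (Vv β)) (J (Vv β)) x = 0 := by
  intro β hβ
  set S := Submodule.span ℂ (X '' (RΘc : Set V)) with hS
  obtain ⟨hβc, hβpos⟩ := (hRcpos β).1 hβ
  have hβR : β ∈ R := ((hRΘc β).1 hβc).1
  have hnegc : ∀ α ∈ RΘc, -α ∈ RΘc := by
    intro α hα
    obtain ⟨hαR, hαn⟩ := (hRΘc α).1 hα
    refine (hRΘc _).2 ⟨hRneg α hαR, fun hmem => hαn ?_⟩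
    obtain ⟨_, hcl⟩ := (hRΘ _).1 hmem
    exact (hRΘ α).2 ⟨hαR, by simpa using neg_mem hcl⟩
  have hXS : ∀ α ∈ RΘc, X α ∈ S := fun α hα =>
    Submodule.subset_span ⟨α, hα, rfl⟩
  have hne0 : ∀ α ∈ RΘc, (α : V) ≠ 0 := fun α hα h =>
    hR0 (h ▸ ((hRΘc α).1 hα).1)
  -- Lemma A
  have lemA : ∀ δ ∈ RΘc, ∀ γ ∈ RΘc, g (X (-δ)) (πm ⁅X δ, X γ⁆) = 0 := by
    intro δ hδ γ hγ
    have hδR : δ ∈ R := ((hRΘc δ).1 hδ).1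
    have hγR : γ ∈ R := ((hRΘc γ).1 hγ).1
    by_cases h0 : δ + γ = 0
    · have hγ' : γ = -δ := eq_neg_of_add_eq_zero_right h0
      rw [hγ', hbH δ hδR, hπm3 δ hδR, map_zero]
    · by_cases hmem : δ + γ ∈ R
      · rw [hbR δ hδR γ hγR hmem, map_smul, map_smul]
        by_cases hc : δ + γ ∈ RΘ
        · rw [hπm2 _ hc]; simp
        · have hc' : δ + γ ∈ RΘc := (hRΘc _).2 ⟨hmem, hc⟩
          rw [hπm1 _ hc', hg _ (hnegc δ hδ) _ hc', if_neg, smul_zero]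
          rw [neg_neg]
          exact fun h => hne0 γ hγ (by rwa [add_eq_left] at h)
      · rw [hb0 δ hδR γ hγR hmem h0]; simp
  -- Lemma B: brackets stay in S after projection
  have lemB0 : ∀ δ ∈ RΘc, ∀ γ ∈ RΘc, πm ⁅X δ, X γ⁆ ∈ S := by
    intro δ hδ γ hγ
    have hδR : δ ∈ R := ((hRΘc δ).1 hδ).1
    have hγR : γ ∈ R := ((hRΘc γ).1 hγ).1
    by_cases h0 : δ + γ = 0
    · have hγ' : γ = -δ := eq_neg_of_add_eq_zero_right h0
      rw [hγ', hbH δ hδR, hπm3 δ hδR]; exact zero_mem S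
    · by_cases hmem : δ + γ ∈ R
      · rw [hbR δ hδR γ hγR hmem, map_smul]
        by_cases hc : δ + γ ∈ RΘ
        · rw [hπm2 _ hc, smul_zero]; exact zero_mem S
        · rw [hπm1 _ ((hRΘc _).2 ⟨hmem, hc⟩)]
          exact Submodule.smul_mem _ _ (hXS _ ((hRΘc _).2 ⟨hmem, hc⟩))
      · rw [hb0 δ hδR γ hγR hmem h0, map_zero]; exact zero_mem S
  have lemB : ∀ w ∈ S, ∀ z ∈ S, πm ⁅w, z⁆ ∈ S := by
    intro w hw
    induction hw using Submodule.span_induction with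
    | mem w hw =>
      obtain ⟨δ, hδ, rfl⟩ := hw
      intro z hz
      induction hz using Submodule.span_induction with
      | mem z hz =>
        obtain ⟨γ, hγ, rfl⟩ := hz
        exact lemB0 δ hδ γ hγ
      | zero => simp
      | add y z hy hz ihy ihz =>
        rw [lie_add, map_add]; exact Submodule.add_mem _ ihy ihz
      | smul a z hz ih =>
        rw [lie_smul, map_smul]; exact Submodule.smul_mem _ _ ih
    | zero => intro z hz; simp
    | add y z hy hz ihy ihz =>
      intro w hw
      rw [add_lie, map_add]
      exact Submodule.add_mem _ (ihy w hw) (ihz w hw)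
    | smul a z hz ih =>
      intro w hw
      rw [smul_lie, map_smul]
      exact Submodule.smul_mem _ _ (ih w hw)
  -- J maps S to S
  have lemJS : ∀ z ∈ S, J z ∈ S := by
    intro z hz
    induction hz using Submodule.span_induction with
    | mem z hz =>
      obtain ⟨γ, hγ, rfl⟩ := hz
      rw [hJ γ hγ]
      exact Submodule.smul_mem _ _ (hXS γ hγ)
    | zero => simp
    | add y z hy hz ihy ihz => rw [map_add]; exact Submodule.add_mem _ ihy ihz
    | smul a z hz ih => rw [map_smul]; exact Submodule.smul_mem _ _ ih
  -- J skew wrt g on S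
  have lemJskew : ∀ y ∈ S, ∀ z ∈ S, g (J y) z = - g y (J z) := by
    intro y hy
    induction hy using Submodule.span_induction with
    | mem y hy =>
      obtain ⟨α, hα, rfl⟩ := hy
      intro z hz
      induction hz using Submodule.span_induction with
      | mem z hz =>
        obtain ⟨γ, hγ, rfl⟩ := hz
        rw [hJ α hα, hJ γ hγ, map_smul, LinearMap.smul_apply, map_smul,
          hg α hα γ hγ]
        simp only [smul_eq_mul]
        by_cases h : γ = -α
        · subst h
          rw [if_pos rfl, heps2]
          push_cast
          ring
        · rw [if_neg h]; ring
      | zero => simp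
      | add y z hy hz ihy ihz => rw [map_add, map_add, map_add]; rw [ihy, ihz]; ring
      | smul a z hz ih => rw [map_smul, map_smul, map_smul, smul_eq_mul, smul_eq_mul, ih]; ring
    | zero => intro z hz; simp
    | add y z hy hz ihy ihz =>
      intro w hw
      simp only [map_add, LinearMap.add_apply, ihy w hw, ihz w hw]
      ring
    | smul a z hz ih =>
      intro w hw
      simp only [map_smul, LinearMap.smul_apply, smul_eq_mul, ih w hw]
      ring
  -- g w (nab w y) = 0
  have lemF : ∀ w ∈ S, ∀ y ∈ S, g w (nab w y) = 0 := by
    intro w hw y hy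
    have h := hU w hw y hy w hw
    rw [lie_self, map_zero, LinearMap.map_zero₂] at h
    rw [hnab, map_add, map_smul, smul_eq_mul, hgsym w (U w y)]
    rw [zero_add] at h
    linear_combination (1/2 : ℂ) * h
  -- basic data about β
  have hnβc : -β ∈ RΘc := hnegc β hβc
  have hVmem : Vv β ∈ S := by
    rw [hVv]
    exact Submodule.smul_mem _ _ (Submodule.sub_mem _ (hXS β hβc) (hXS _ hnβc))
  have hJVmem : J (Vv β) ∈ S := lemJS _ hVmem
  -- π[Vv β, J (Vv β)] = 0
  have lemE : πm ⁅Vv β, J (Vv β)⁆ = 0 := by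
    have h1 : ⁅X β, X (-β)⁆ = H β := hbH β hβR
    have h2 : ⁅X (-β), X β⁆ = H (-β) := by
      have := hbH (-β) (hRneg β hβR); rwa [neg_neg] at this
    rw [hVv]
    simp only [map_smul, map_sub, hJ β hβc, hJ _ hnβc, smul_lie, lie_smul,
      sub_lie, lie_sub, lie_self, h1, h2, map_add, smul_zero, zero_sub,
      sub_zero, map_neg, hπm3 β hβR, hπm3 (-β) (hRneg β hβR), neg_zero,
      sub_self, smul_neg]
  have lemE' : πm ⁅J (Vv β), Vv β⁆ = 0 := by
    rw [← lie_skew, map_neg, lemE, neg_zero]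
  -- J (J (Vv β)) = - Vv β
  have jj : ∀ α ∈ RΘc, J (J (X α)) = - X α := by
    intro α hα
    rw [hJ α hα, map_smul, hJ α hα, smul_smul]
    have h : (Complex.I * eps α) * (Complex.I * eps α) = -1 := by
      rcases heps1 α hα with h | h <;> rw [h] <;> push_cast <;>
        linear_combination Complex.I_sq
    rw [h, neg_smul, one_smul]
  have lemJJ : J (J (Vv β)) = - Vv β := by
    rw [hVv]
    simp only [map_smul, map_sub, jj β hβc, jj _ hnβc]
    module
  -- Lemma D
  have lemD : ∀ z ∈ S, g (J (Vv β)) (πm ⁅Vv β, z⁆) = g (Vv β) (πm ⁅J (Vv β), z⁆) := by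
    intro z hz
    induction hz using Submodule.span_induction with
    | mem z hz =>
      obtain ⟨γ, hγ, rfl⟩ := hz
      have h2 := lemA β hβc γ hγ
      have h3 := lemA (-β) hnβc γ hγ
      rw [neg_neg] at h3
      rw [hVv]
      simp only [map_smul, map_sub, map_add, hJ β hβc, hJ _ hnβc, heps2,
        LinearMap.smul_apply, LinearMap.sub_apply, LinearMap.add_apply,
        smul_lie, lie_smul, sub_lie, lie_sub, add_lie, lie_add, smul_eq_mul,
        map_neg, LinearMap.neg_apply, neg_lie, lie_neg, smul_neg, neg_smul]
      push_cast
      linear_combination ((Real.sqrt (2 * lam β) : ℂ))⁻¹ ^ 2 *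
        (Complex.I * eps β) * (2 * h2 - 2 * h3)
    | zero => simp
    | add y z hy hz ihy ihz =>
      rw [lie_add, lie_add, map_add, map_add, map_add, map_add, ihy, ihz]
    | smul a z hz ih =>
      rw [lie_smul, lie_smul, map_smul, map_smul, map_smul, map_smul,
        smul_eq_mul, smul_eq_mul, ih]
  -- main
  intro z hz
  have hJz : J z ∈ S := lemJS z hz
  have hUVz : U (Vv β) z ∈ S := hUmem _ _
  have hπVz : πm ⁅Vv β, z⁆ ∈ S := lemB _ hVmem z hz
  have hπJVz : πm ⁅J (Vv β), z⁆ ∈ S := lemB _ hJVmem z hz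
  have hnabVz : nab (Vv β) z ∈ S := by
    rw [hnab]
    exact Submodule.add_mem _ (Submodule.smul_mem _ _ hπVz) (hUmem _ _)
  have hnabJVz : nab (J (Vv β)) z ∈ S := by
    rw [hnab]
    exact Submodule.add_mem _ (Submodule.smul_mem _ _ hπJVz) (hUmem _ _)
  constructor
  · rw [hcovOm, map_sub, lemF _ hVmem _ hJz]
    have hskew : g (Vv β) (J (nab (Vv β) z)) = - g (J (Vv β)) (nab (Vv β) z) := by
      rw [lemJskew _ hVmem _ hnabVz]; ring
    rw [hskew]
    have hu := hU (Vv β) hVmem z hz (J (Vv β)) hJVmem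
    rw [lemE', map_zero, LinearMap.zero_apply, zero_add, hgsym (U (Vv β) z)] at hu
    have hd := lemD z hz
    rw [hnab, map_add, map_smul, smul_eq_mul]
    linear_combination (1/2:ℂ) * hu - (1/2:ℂ) * hd
  · rw [hcovOm, map_sub, lemF _ hJVmem _ hJz]
    have hskew : g (J (Vv β)) (J (nab (J (Vv β)) z)) = g (Vv β) (nab (J (Vv β)) z) := by
      have h := lemJskew _ hJVmem _ hnabJVz
      rw [lemJJ, map_neg, LinearMap.neg_apply] at h
      linear_combination h
    rw [hskew]
    have hu := hU (J (Vv β)) hJVmem z hz (Vv β) hVmem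
    rw [lemE, map_zero, LinearMap.zero_apply, zero_add, hgsym (U (J (Vv β)) z)] at hu
    have hd := lemD z hz
    rw [hnab, map_add, map_smul, smul_eq_mul]
    linear_combination -(1/2:ℂ) * hu - (1/2:ℂ) * hd
end

section
/- The codifferential of the Kähler form vanishes: for every X ∈ 𝔪^ℂ, (δΩ)(X) := Σ_{β ∈ R_Θ⁺} [ (∇_{V_β} Ω)(V_β, X) + (∇_{J V_β} Ω)(J V_β, X) ] = 0. (Hence every invariant almost Hermitian structure on a flag manifold is almost semi-Kähler.) -/
/- STATEMENT 13:
The codifferential of the Kähler form vanishes: for every X ∈ 𝔪^ℂ,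
(δΩ)(X) := Σ_{β ∈ R_Θ⁺} [ (∇_{V_β} Ω)(V_β, X) + (∇_{J V_β} Ω)(J V_β, X) ] = 0.
(Hence every invariant almost Hermitian structure on a flag manifold is
almost semi-Kähler.)

Context: the invariant almost Hermitian flag manifold setup: Weyl basis
{X_α, H_α} with structure constants n_{α,β}; Θ ⊆ Σ, R(Θ) = ⟨Θ⟩ ∩ R,
R_Θ = R ∖ R(Θ) (here `RΘc`), R_Θ⁺ = R_Θ ∩ R⁺ (here `Rcpos`);
𝔪^ℂ = ⨁_{α∈R_Θ} 𝔤_α with projection π_𝔪; metric data λ, g; U and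
∇(X,Y) = −(1/2) π_𝔪[X,Y] + U(X,Y); invariant almost complex structure
J X_α = i ε_α X_α; V_α = (X_α − X_{−α})/√(2λ_α);
Ω(X,Y) = g(X, JY) and (∇_X Ω)(Y,Z) = g(Y, ∇(X, JZ) − J ∇(X, Z)). -/
theorem stmt13
    (L : Type*) [LieRing L] [LieAlgebra ℂ L]
    (V : Type*) [AddCommGroup V] [DecidableEq V]
    (R : Finset V) (hR0 : (0 : V) ∉ R) (hRneg : ∀ α ∈ R, -α ∈ R)
    (Rpos : Finset V) (hposR : Rpos ⊆ R)
    (hposneg : ∀ α ∈ R, α ∈ Rpos ↔ -α ∉ Rpos)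
    (Sig : Finset V) (hSigpos : Sig ⊆ Rpos)
    (Θ : Finset V) (hΘSig : Θ ⊆ Sig)
    (RΘ : Finset V)
    (hRΘ : ∀ α, α ∈ RΘ ↔ α ∈ R ∧ α ∈ AddSubgroup.closure (Θ : Set V))
    (RΘc : Finset V) (hRΘc : ∀ α, α ∈ RΘc ↔ α ∈ R ∧ α ∉ RΘ)
    (X H : V → L) (n : V → V → ℝ)
    (hbH : ∀ α ∈ R, ⁅X α, X (-α)⁆ = H α)
    (hbR : ∀ α ∈ R, ∀ β ∈ R, α + β ∈ R → ⁅X α, X β⁆ = (n α β : ℂ) • X (α + β))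
    (hb0 : ∀ α ∈ R, ∀ β ∈ R, α + β ∉ R → α + β ≠ 0 → ⁅X α, X β⁆ = (0 : L))
    (hn1 : ∀ α β : V, n α β = - n β α)
    (hn2 : ∀ α β : V, n α β = - n (-α) (-β))
    (hn3 : ∀ α β γ : V, α + β + γ = 0 → n α β = n β γ ∧ n β γ = n γ α)
    (πm : L →ₗ[ℂ] L)
    (hπm1 : ∀ α ∈ RΘc, πm (X α) = X α)
    (hπm2 : ∀ α ∈ RΘ, πm (X α) = 0)
    (hπm3 : ∀ α ∈ R, πm (H α) = 0)
    (lam : V → ℝ) (hlam1 : ∀ α ∈ RΘc, 0 < lam α) (hlam2 : ∀ α : V, lam (-α) = lam α)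
    (g : L →ₗ[ℂ] L →ₗ[ℂ] ℂ) (hgsym : ∀ x y : L, g x y = g y x)
    (hg : ∀ α ∈ RΘc, ∀ β ∈ RΘc, g (X α) (X β) = if β = -α then (lam α : ℂ) else 0)
    (hgnd : ∀ x ∈ Submodule.span ℂ (X '' (RΘc : Set V)),
      (∀ z ∈ Submodule.span ℂ (X '' (RΘc : Set V)), g x z = 0) → x = 0)
    (U : L →ₗ[ℂ] L →ₗ[ℂ] L) (hUsym : ∀ x y : L, U x y = U y x)
    (hUmem : ∀ x y : L, U x y ∈ Submodule.span ℂ (X '' (RΘc : Set V)))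
    (hU : ∀ x ∈ Submodule.span ℂ (X '' (RΘc : Set V)),
          ∀ y ∈ Submodule.span ℂ (X '' (RΘc : Set V)),
          ∀ z ∈ Submodule.span ℂ (X '' (RΘc : Set V)),
      (2 : ℂ) * g (U x y) z = g (πm ⁅z, x⁆) y + g x (πm ⁅z, y⁆))
    (eps : V → ℝ) (heps1 : ∀ α ∈ RΘc, eps α = 1 ∨ eps α = -1)
    (heps2 : ∀ α : V, eps (-α) = - eps α)
    (J : L →ₗ[ℂ] L)
    (hJ : ∀ α ∈ RΘc, J (X α) = (Complex.I * (eps α : ℂ)) • X α)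
    (nab : L → L → L)
    (hnab : ∀ x y : L, nab x y = -(1/2 : ℂ) • πm ⁅x, y⁆ + U x y)
    (covOm : L → L → L → ℂ)
    (hcovOm : ∀ x y z : L, covOm x y z = g y (nab x (J z) - J (nab x z)))
    (Rcpos : Finset V) (hRcpos : ∀ α, α ∈ Rcpos ↔ α ∈ RΘc ∧ α ∈ Rpos)
    (Vv : V → L)
    (hVv : ∀ α : V, Vv α = (((Real.sqrt (2 * lam α))⁻¹ : ℝ) : ℂ) • (X α - X (-α)))
    :
    ∀ x ∈ Submodule.span ℂ (X '' (RΘc : Set V)),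
      ∑ β ∈ Rcpos,
        (covOm (Vv β) (Vv β) x + covOm (J (Vv β)) (J (Vv β)) x) = 0 := by
  -- abbreviation for the span
  set M := Submodule.span ℂ (X '' (RΘc : Set V)) with hM
  have hXmem : ∀ α ∈ RΘc, X α ∈ M := fun α h =>
    Submodule.subset_span ⟨α, h, rfl⟩
  -- RΘc is closed under negation
  have hRΘcneg : ∀ α ∈ RΘc, -α ∈ RΘc := by
    intro α hα
    obtain ⟨hαR, hαΘ⟩ := (hRΘc α).1 hα
    refine (hRΘc (-α)).2 ⟨hRneg α hαR, ?_⟩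
    intro h
    obtain ⟨h1, h2⟩ := (hRΘ (-α)).1 h
    exact hαΘ ((hRΘ α).2 ⟨hαR, by simpa using neg_mem h2⟩)
  -- linearity of nab
  have nab_add_left : ∀ x y z : L, nab (x + y) z = nab x z + nab y z := by
    intro x y z
    simp only [hnab, add_lie, map_add, smul_add, LinearMap.add_apply]
    abel
  have nab_smul_left : ∀ (a : ℂ) (x z : L), nab (a • x) z = a • nab x z := by
    intro a x z
    simp only [hnab, smul_lie, map_smul, LinearMap.smul_apply, smul_add]
    rw [smul_comm]
  have nab_add_right : ∀ x u v : L, nab x (u + v) = nab x u + nab x v := by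
    intro x u v
    simp only [hnab, lie_add, map_add, smul_add]
    abel
  have nab_smul_right : ∀ (a : ℂ) (x u : L), nab x (a • u) = a • nab x u := by
    intro a x u
    simp only [hnab, lie_smul, map_smul, smul_add]
    rw [smul_comm]
  -- linearity of covOm in each slot
  have cov1_add : ∀ u v y z : L, covOm (u + v) y z = covOm u y z + covOm v y z := by
    intro u v y z
    simp only [hcovOm, nab_add_left, map_add]
    rw [← sub_add_sub_comm, map_add]
  have cov1_smul : ∀ (a : ℂ) (u y z : L), covOm (a • u) y z = a * covOm u y z := by
    intro a u y z
    simp only [hcovOm, nab_smul_left, map_smul]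
    rw [← smul_sub, map_smul, smul_eq_mul]
  have cov2_add : ∀ x u v z : L, covOm x (u + v) z = covOm x u z + covOm x v z := by
    intro x u v z
    simp only [hcovOm, map_add, LinearMap.add_apply]
  have cov2_smul : ∀ (a : ℂ) (x u z : L), covOm x (a • u) z = a * covOm x u z := by
    intro a x u z
    simp only [hcovOm, map_smul, LinearMap.smul_apply, smul_eq_mul]
  have cov3_add : ∀ x y u v : L, covOm x y (u + v) = covOm x y u + covOm x y v := by
    intro x y u v
    simp only [hcovOm, map_add, nab_add_right]
    rw [← sub_add_sub_comm, map_add]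
  have cov3_smul : ∀ (a : ℂ) (x y u : L), covOm x y (a • u) = a * covOm x y u := by
    intro a x y u
    simp only [hcovOm, map_smul, nab_smul_right]
    rw [← smul_sub, map_smul, smul_eq_mul]
  have cov3_zero : ∀ x y : L, covOm x y 0 = 0 := by
    intro x y
    have : covOm x y ((0:ℂ) • (0:L)) = 0 := by rw [cov3_smul]; ring
    simpa using this
  -- key vanishing of g against projected brackets
  have key : ∀ α ∈ RΘc, ∀ γ ∈ RΘc,
      πm ⁅X α, X γ⁆ ∈ M ∧ g (X (-α)) (πm ⁅X α, X γ⁆) = 0 := by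
    intro α hα γ hγ
    obtain ⟨hαR, _⟩ := (hRΘc α).1 hα
    obtain ⟨hγR, _⟩ := (hRΘc γ).1 hγ
    have hγ0 : γ ≠ 0 := fun h => hR0 (h ▸ hγR)
    by_cases h0 : α + γ = 0
    · have hγ' : γ = -α := eq_neg_of_add_eq_zero_right h0
      rw [hγ', hbH α hαR, hπm3 α hαR]
      simp
    · by_cases hs : α + γ ∈ R
      · rw [hbR α hαR γ hγR hs, map_smul]
        by_cases hΘ : α + γ ∈ RΘ
        · rw [hπm2 _ hΘ]; simp
        · have hmem : α + γ ∈ RΘc := (hRΘc _).2 ⟨hs, hΘ⟩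
          rw [hπm1 _ hmem]
          refine ⟨Submodule.smul_mem _ _ (hXmem _ hmem), ?_⟩
          rw [map_smul, hg (-α) (hRΘcneg α hα) (α + γ) hmem, neg_neg]
          rw [if_neg (fun h => hγ0 (by simpa using h)), smul_zero]
      · rw [hb0 α hαR γ hγR hs h0]
        simp
  -- g (X (-α)) (U (X α) (X γ)) = 0
  have hU0 : ∀ α ∈ RΘc, ∀ γ ∈ RΘc, g (X (-α)) (U (X α) (X γ)) = 0 := by
    intro α hα γ hγ
    have hα' := hRΘcneg α hα
    have hαR' : -α ∈ R := ((hRΘc (-α)).1 hα').1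
    have h2 := hU (X α) (hXmem α hα) (X γ) (hXmem γ hγ) (X (-α)) (hXmem _ hα')
    have hb : ⁅X (-α), X α⁆ = H (-α) := by
      have := hbH (-α) hαR'; rwa [neg_neg] at this
    rw [hb, hπm3 _ hαR'] at h2
    have h3 := (key (-α) hα' γ hγ).2
    rw [neg_neg] at h3
    rw [h3] at h2
    simp only [map_zero, LinearMap.zero_apply, add_zero, zero_add] at h2
    have := mul_eq_zero.1 h2
    rcases this with h | h
    · norm_num at h
    · rw [hgsym]; exact h
  -- g (X (-α)) (J u) = I * eps α * g (X (-α)) u  for u ∈ M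
  have hgJ : ∀ α ∈ RΘc, ∀ u ∈ M, g (X (-α)) (J u)
      = (Complex.I * (eps α : ℂ)) * g (X (-α)) u := by
    intro α hα u hu
    induction hu using Submodule.span_induction with
    | mem u hu' =>
      obtain ⟨δ, hδ, rfl⟩ := hu'
      rw [hJ δ hδ, map_smul, smul_eq_mul, hg (-α) (hRΘcneg α hα) δ hδ, neg_neg]
      by_cases hδα : δ = α
      · subst hδα; simp
      · rw [if_neg hδα]; ring
    | zero => simp
    | add u v hu hv ihu ihv => rw [map_add, map_add, map_add, ihu, ihv]; ring
    | smul a u hu ih => rw [map_smul, map_smul, map_smul, smul_eq_mul, smul_eq_mul, ih]; ring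
  -- nab (X α) (X γ) is in M and g-orthogonal to X (-α)
  have hnabm : ∀ α ∈ RΘc, ∀ γ ∈ RΘc,
      nab (X α) (X γ) ∈ M ∧ g (X (-α)) (nab (X α) (X γ)) = 0 := by
    intro α hα γ hγ
    rw [hnab]
    obtain ⟨hm, hz⟩ := key α hα γ hγ
    refine ⟨Submodule.add_mem _ (Submodule.smul_mem _ _ hm) (hUmem _ _), ?_⟩
    rw [map_add, map_smul, hz, hU0 α hα γ hγ]
    simp
  -- covOm (X α) (X (-α)) (X γ) = 0
  have covbase : ∀ α ∈ RΘc, ∀ γ ∈ RΘc, covOm (X α) (X (-α)) (X γ) = 0 := by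
    intro α hα γ hγ
    obtain ⟨hm, hz⟩ := hnabm α hα γ hγ
    rw [hcovOm, hJ γ hγ, nab_smul_right, map_sub, map_smul, hgJ α hα _ hm, hz]
    simp
  -- covOm (X α) (X (-α)) x = 0 for x ∈ M
  have covz : ∀ α ∈ RΘc, ∀ x ∈ M, covOm (X α) (X (-α)) x = 0 := by
    intro α hα x hx
    induction hx using Submodule.span_induction with
    | mem u hu' =>
      obtain ⟨δ, hδ, rfl⟩ := hu'
      exact covbase α hα δ hδ
    | zero => exact cov3_zero _ _
    | add u v hu hv ihu ihv => rw [cov3_add, ihu, ihv]; ring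
    | smul a u hu ih => rw [cov3_smul, ih]; ring
  -- final assembly
  intro x hx
  apply Finset.sum_eq_zero
  intro β hβ
  obtain ⟨hβc, _⟩ := (hRcpos β).1 hβ
  have hβc' := hRΘcneg β hβc
  set c : ℂ := (((Real.sqrt (2 * lam β))⁻¹ : ℝ) : ℂ) with hc
  set e : ℂ := ((eps β : ℝ) : ℂ) with he
  have hV : Vv β = c • X β + (-c) • X (-β) := by
    rw [hVv β, ← hc]; module
  have hJV : J (Vv β) = (c * (Complex.I * e)) • X β + (c * (Complex.I * e)) • X (-β) := by
    have hne : ((-eps β : ℝ) : ℂ) = -e := by rw [he]; push_cast; ring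
    rw [hVv β, map_smul, map_sub, hJ β hβc, hJ (-β) hβc', heps2, hne, ← hc, ← he]
    module
  have expand : ∀ a b : ℂ, covOm (a • X β + b • X (-β)) (a • X β + b • X (-β)) x =
      a * a * covOm (X β) (X β) x + a * b * covOm (X β) (X (-β)) x
      + b * a * covOm (X (-β)) (X β) x + b * b * covOm (X (-β)) (X (-β)) x := by
    intro a b
    rw [cov1_add, cov1_smul, cov1_smul, cov2_add, cov2_add,
      cov2_smul, cov2_smul, cov2_smul, cov2_smul]
    ring
  have hT2 : covOm (X β) (X (-β)) x = 0 := covz β hβc x hx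
  have hT3 : covOm (X (-β)) (X β) x = 0 := by
    have := covz (-β) hβc' x hx
    rwa [neg_neg] at this
  have hc2 : (c * (Complex.I * e)) * (c * (Complex.I * e)) = -(c * c) := by
    have hee : e * e = 1 := by
      rcases heps1 β hβc with h | h <;> rw [he, h] <;> norm_num
    have : (c * (Complex.I * e)) * (c * (Complex.I * e))
        = (c * c) * (Complex.I * Complex.I) * (e * e) := by ring
    rw [this, Complex.I_mul_I, hee]; ring
  rw [hJV, hV, expand, expand, hT2, hT3]
  linear_combination (covOm (X β) (X β) x + covOm (X (-β)) (X (-β)) x) * hc2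
end

section
/- For all X, Y ∈ 𝔫^ℂ one has U(X, Y) ∈ 𝔫^ℂ and U(X, Y) = U'(X, Y); i.e., the restriction of U to 𝔫^ℂ × 𝔫^ℂ coincides with U'. -/
/- STATEMENT 14:
For all X, Y ∈ 𝔫^ℂ one has U(X, Y) ∈ 𝔫^ℂ and U(X, Y) = U'(X, Y); i.e., the
restriction of U to 𝔫^ℂ × 𝔫^ℂ coincides with U'.

Context: Weyl basis {X_α, H_α}; Θ ⊆ Σ, R(Θ) = ⟨Θ⟩ ∩ R, R_Θ = R ∖ R(Θ)
(here `RΘc`), 𝔪^ℂ = ⨁_{α∈R_Θ} 𝔤_α with projection π_𝔪; metric data λ, g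
(nondegenerate on 𝔪^ℂ); U the unique symmetric bilinear map on 𝔪^ℂ with
2 g(U(X,Y), Z) = g(π_𝔪[Z,X], Y) + g(X, π_𝔪[Z,Y]).  For Θ' ⊆ Σ with Θ' ⊄ Θ,
R' = ⟨Θ'⟩ ∩ R, 𝔫^ℂ = ⨁_{γ∈R'∖R(Θ)} 𝔤_γ ⊆ 𝔪^ℂ with projection π_𝔫, and U'
the unique symmetric bilinear map on 𝔫^ℂ with
2 g(U'(X,Y), Z) = g(π_𝔫[Z,X], Y) + g(X, π_𝔫[Z,Y]) (g restricted to 𝔫^ℂ is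
nondegenerate). -/
theorem stmt14
    (L : Type*) [LieRing L] [LieAlgebra ℂ L]
    (V : Type*) [AddCommGroup V] [DecidableEq V]
    (R : Finset V) (hR0 : (0 : V) ∉ R) (hRneg : ∀ α ∈ R, -α ∈ R)
    (Rpos : Finset V) (hposR : Rpos ⊆ R)
    (hposneg : ∀ α ∈ R, α ∈ Rpos ↔ -α ∉ Rpos)
    (Sig : Finset V) (hSigpos : Sig ⊆ Rpos)
    (Θ : Finset V) (hΘSig : Θ ⊆ Sig)
    (RΘ : Finset V)
    (hRΘ : ∀ α, α ∈ RΘ ↔ α ∈ R ∧ α ∈ AddSubgroup.closure (Θ : Set V))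
    (RΘc : Finset V) (hRΘc : ∀ α, α ∈ RΘc ↔ α ∈ R ∧ α ∉ RΘ)
    (X H : V → L) (n : V → V → ℝ)
    (hbH : ∀ α ∈ R, ⁅X α, X (-α)⁆ = H α)
    (hbR : ∀ α ∈ R, ∀ β ∈ R, α + β ∈ R → ⁅X α, X β⁆ = (n α β : ℂ) • X (α + β))
    (hb0 : ∀ α ∈ R, ∀ β ∈ R, α + β ∉ R → α + β ≠ 0 → ⁅X α, X β⁆ = (0 : L))
    (hn1 : ∀ α β : V, n α β = - n β α)
    (hn2 : ∀ α β : V, n α β = - n (-α) (-β))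
    (hn3 : ∀ α β γ : V, α + β + γ = 0 → n α β = n β γ ∧ n β γ = n γ α)
    (πm : L →ₗ[ℂ] L)
    (hπm1 : ∀ α ∈ RΘc, πm (X α) = X α)
    (hπm2 : ∀ α ∈ RΘ, πm (X α) = 0)
    (hπm3 : ∀ α ∈ R, πm (H α) = 0)
    (lam : V → ℝ) (hlam1 : ∀ α ∈ RΘc, 0 < lam α) (hlam2 : ∀ α : V, lam (-α) = lam α)
    (g : L →ₗ[ℂ] L →ₗ[ℂ] ℂ) (hgsym : ∀ x y : L, g x y = g y x)
    (hg : ∀ α ∈ RΘc, ∀ β ∈ RΘc, g (X α) (X β) = if β = -α then (lam α : ℂ) else 0)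
    (hgnd : ∀ x ∈ Submodule.span ℂ (X '' (RΘc : Set V)),
      (∀ z ∈ Submodule.span ℂ (X '' (RΘc : Set V)), g x z = 0) → x = 0)
    (U : L →ₗ[ℂ] L →ₗ[ℂ] L) (hUsym : ∀ x y : L, U x y = U y x)
    (hUmem : ∀ x y : L, U x y ∈ Submodule.span ℂ (X '' (RΘc : Set V)))
    (hU : ∀ x ∈ Submodule.span ℂ (X '' (RΘc : Set V)),
          ∀ y ∈ Submodule.span ℂ (X '' (RΘc : Set V)),
          ∀ z ∈ Submodule.span ℂ (X '' (RΘc : Set V)),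
      (2 : ℂ) * g (U x y) z = g (πm ⁅z, x⁆) y + g x (πm ⁅z, y⁆))
    (Θ' : Finset V) (hΘ'Sig : Θ' ⊆ Sig) (hΘ'Θ : ¬ Θ' ⊆ Θ)
    (R' : Finset V)
    (hR' : ∀ α, α ∈ R' ↔ α ∈ R ∧ α ∈ AddSubgroup.closure (Θ' : Set V))
    (R'c : Finset V) (hR'c : ∀ γ, γ ∈ R'c ↔ γ ∈ R' ∧ γ ∉ RΘ)
    (πn : L →ₗ[ℂ] L)
    (hπn1 : ∀ γ ∈ R'c, πn (X γ) = X γ)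
    (hπn2 : ∀ γ ∈ R, γ ∉ R'c → πn (X γ) = 0)
    (hπn3 : ∀ α ∈ R, πn (H α) = 0)
    (U' : L →ₗ[ℂ] L →ₗ[ℂ] L) (hU'sym : ∀ x y : L, U' x y = U' y x)
    (hU'mem : ∀ x y : L, U' x y ∈ Submodule.span ℂ (X '' (R'c : Set V)))
    (hU' : ∀ x ∈ Submodule.span ℂ (X '' (R'c : Set V)),
           ∀ y ∈ Submodule.span ℂ (X '' (R'c : Set V)),
           ∀ z ∈ Submodule.span ℂ (X '' (R'c : Set V)),
      (2 : ℂ) * g (U' x y) z = g (πn ⁅z, x⁆) y + g x (πn ⁅z, y⁆))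
    (hgnd' : ∀ x ∈ Submodule.span ℂ (X '' (R'c : Set V)),
      (∀ z ∈ Submodule.span ℂ (X '' (R'c : Set V)), g x z = 0) → x = 0)
    :
    ∀ x ∈ Submodule.span ℂ (X '' (R'c : Set V)),
      ∀ y ∈ Submodule.span ℂ (X '' (R'c : Set V)),
        U x y ∈ Submodule.span ℂ (X '' (R'c : Set V)) ∧ U x y = U' x y := by
  have hR'cmem : ∀ γ ∈ R'c, γ ∈ RΘc := by
    intro γ hγ
    rw [hR'c] at hγ
    rw [hRΘc]
    exact ⟨((hR' γ).mp hγ.1).1, hγ.2⟩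
  have hNM : Submodule.span ℂ (X '' (R'c : Set V)) ≤
      Submodule.span ℂ (X '' (RΘc : Set V)) :=
    Submodule.span_mono (Set.image_mono (fun γ hγ => hR'cmem γ hγ))
  have hXN : ∀ γ ∈ R'c, X γ ∈ Submodule.span ℂ (X '' (R'c : Set V)) :=
    fun γ hγ => Submodule.subset_span ⟨γ, hγ, rfl⟩
  have hR'cneg : ∀ γ ∈ R'c, -γ ∈ R'c := by
    intro γ hγ
    rw [hR'c] at hγ ⊢
    obtain ⟨h1, h2⟩ := hγ
    rw [hR'] at h1 ⊢
    refine ⟨⟨hRneg _ h1.1, neg_mem h1.2⟩, ?_⟩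
    intro hn
    apply h2
    rw [hRΘ] at hn ⊢
    exact ⟨h1.1, by simpa using neg_mem hn.2⟩
  -- key lemma: πm and πn agree on brackets of basis elements of 𝔫
  have key : ∀ γ ∈ R'c, ∀ α ∈ R'c, πm ⁅X γ, X α⁆ = πn ⁅X γ, X α⁆ := by
    intro γ hγ α hα
    have hγ' := (hR'c γ).mp hγ
    have hα' := (hR'c α).mp hα
    have hγR' := (hR' γ).mp hγ'.1
    have hαR' := (hR' α).mp hα'.1
    have hγR : γ ∈ R := hγR'.1
    have hαR : α ∈ R := hαR'.1
    by_cases h0 : γ + α = 0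
    · have hα2 : α = -γ := eq_neg_of_add_eq_zero_right h0
      rw [hα2, hbH γ hγR, hπm3 γ hγR, hπn3 γ hγR]
    · by_cases hsum : γ + α ∈ R
      · rw [hbR γ hγR α hαR hsum, map_smul, map_smul]
        have hcl : γ + α ∈ AddSubgroup.closure (Θ' : Set V) :=
          add_mem hγR'.2 hαR'.2
        by_cases hRΘm : γ + α ∈ RΘ
        · have h1 : πm (X (γ + α)) = 0 := hπm2 _ hRΘm
          have h2 : πn (X (γ + α)) = 0 := by
            apply hπn2 _ hsum
            intro hc
            exact ((hR'c _).mp hc).2 hRΘm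
          rw [h1, h2]
        · have hmem : γ + α ∈ R'c := by
            rw [hR'c]
            exact ⟨(hR' _).mpr ⟨hsum, hcl⟩, hRΘm⟩
          have hmem2 : γ + α ∈ RΘc := hR'cmem _ hmem
          rw [hπm1 _ hmem2, hπn1 _ hmem]
      · rw [hb0 γ hγR α hαR hsum h0, map_zero, map_zero]
  -- extend to all of 𝔫
  have key2 : ∀ z ∈ Submodule.span ℂ (X '' (R'c : Set V)),
      ∀ x ∈ Submodule.span ℂ (X '' (R'c : Set V)), πm ⁅z, x⁆ = πn ⁅z, x⁆ := by
    intro z hz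
    induction hz using Submodule.span_induction with
    | mem v hv =>
      obtain ⟨γ, hγ, rfl⟩ := hv
      intro x hx
      induction hx using Submodule.span_induction with
      | mem w hw =>
        obtain ⟨α, hα, rfl⟩ := hw
        exact key γ hγ α hα
      | zero => simp
      | add a b _ _ ha hb => rw [lie_add, map_add, map_add, ha, hb]
      | smul c a _ ha => rw [lie_smul, map_smul, map_smul, ha]
    | zero => intro x _; simp
    | add a b _ _ ha hb =>
      intro x hx
      rw [add_lie, map_add, map_add, ha x hx, hb x hx]
    | smul c a _ ha =>
      intro x hx
      rw [smul_lie, map_smul, map_smul, ha x hx]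
  -- elements of 𝔫 are g-orthogonal to X δ for δ ∈ RΘc \ R'c
  have horthN : ∀ δ ∈ RΘc, δ ∉ R'c → ∀ w ∈ Submodule.span ℂ (X '' (R'c : Set V)),
      g w (X δ) = 0 := by
    intro δ hδ hδ' w hw
    induction hw using Submodule.span_induction with
    | mem v hv =>
      obtain ⟨γ, hγ, rfl⟩ := hv
      rw [hg γ (hR'cmem γ hγ) δ hδ, if_neg]
      intro h
      exact hδ' (h ▸ hR'cneg γ hγ)
    | zero => simp
    | add a b _ _ ha hb => simp [ha, hb]
    | smul c a _ ha => simp [ha]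
  -- bracket orthogonality on basis elements
  have hbr0 : ∀ δ ∈ RΘc, δ ∉ R' → ∀ α ∈ R'c, ∀ β ∈ R'c,
      g (πm ⁅X δ, X α⁆) (X β) = 0 := by
    intro δ hδ hδR' α hα β hβ
    have hδR : δ ∈ R := ((hRΘc δ).mp hδ).1
    have hα' := (hR' α).mp ((hR'c α).mp hα).1
    have hβ' := (hR' β).mp ((hR'c β).mp hβ).1
    have hαR : α ∈ R := hα'.1
    by_cases h0 : δ + α = 0
    · rw [eq_neg_of_add_eq_zero_right h0, hbH δ hδR, hπm3 δ hδR, map_zero,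
        LinearMap.zero_apply]
    · by_cases hsum : δ + α ∈ R
      · rw [hbR δ hδR α hαR hsum, map_smul, map_smul, LinearMap.smul_apply]
        by_cases hRΘm : δ + α ∈ RΘ
        · rw [hπm2 _ hRΘm, map_zero, LinearMap.zero_apply, smul_zero]
        · have hmem2 : δ + α ∈ RΘc := (hRΘc _).mpr ⟨hsum, hRΘm⟩
          rw [hπm1 _ hmem2, hg _ hmem2 β (hR'cmem β hβ), if_neg, smul_zero]
          intro heq
          apply hδR'
          rw [hR']
          refine ⟨hδR, ?_⟩
          have : δ = -β + -α := by
            have := heq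
            abel_nf at this ⊢
            linear_combination (norm := abel1) this
          rw [this]
          exact add_mem (neg_mem hβ'.2) (neg_mem hα'.2)
      · rw [hb0 δ hδR α hαR hsum h0, map_zero, map_zero, LinearMap.zero_apply]
  -- extend bilinearly
  have hbr0' : ∀ δ ∈ RΘc, δ ∉ R' → ∀ x ∈ Submodule.span ℂ (X '' (R'c : Set V)),
      ∀ y ∈ Submodule.span ℂ (X '' (R'c : Set V)), g (πm ⁅X δ, x⁆) y = 0 := by
    intro δ hδ hδR' x hx
    induction hx using Submodule.span_induction with
    | mem v hv =>
      obtain ⟨α, hα, rfl⟩ := hv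
      intro y hy
      induction hy using Submodule.span_induction with
      | mem w hw =>
        obtain ⟨β, hβ, rfl⟩ := hw
        exact hbr0 δ hδ hδR' α hα β hβ
      | zero => simp
      | add a b _ _ ha hb => rw [map_add, ha, hb, add_zero]
      | smul c a _ ha => rw [map_smul, ha, smul_zero]
    | zero => intro y _; simp
    | add a b _ _ ha hb =>
      intro y hy
      rw [lie_add, map_add, map_add, LinearMap.add_apply, ha y hy, hb y hy, add_zero]
    | smul c a _ ha =>
      intro y hy
      rw [lie_smul, map_smul, map_smul, LinearMap.smul_apply, ha y hy, smul_zero]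
  -- main argument
  intro x hx y hy
  have hxM := hNM hx
  have hyM := hNM hy
  have hdz : ∀ z ∈ Submodule.span ℂ (X '' (RΘc : Set V)),
      g (U x y - U' x y) z = 0 := by
    intro z hz
    rw [map_sub, LinearMap.sub_apply, sub_eq_zero]
    induction hz using Submodule.span_induction with
    | mem v hv =>
      obtain ⟨δ, hδ, rfl⟩ := hv
      by_cases hδ' : δ ∈ R'c
      · have hXδN := hXN δ hδ'
        have e1 := hU x hxM y hyM (X δ) (hNM hXδN)
        have e2 := hU' x hx y hy (X δ) hXδN
        have h1 := key2 (X δ) hXδN x hx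
        have h2 := key2 (X δ) hXδN y hy
        apply mul_left_cancel₀ (two_ne_zero (α := ℂ))
        rw [e1, e2, h1, h2]
      · have hz0 : g (U' x y) (X δ) = 0 := horthN δ hδ hδ' _ (hU'mem x y)
        have hδR'2 : δ ∉ R' := by
          intro hc
          exact hδ' ((hR'c δ).mpr ⟨hc, ((hRΘc δ).mp hδ).2⟩)
        have e1 := hU x hxM y hyM (X δ) (Submodule.subset_span ⟨δ, hδ, rfl⟩)
        have t1 := hbr0' δ hδ hδR'2 x hx y hy
        have t2 := hbr0' δ hδ hδR'2 y hy x hx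
        have : (2 : ℂ) * g (U x y) (X δ) = 0 := by
          rw [e1, t1, hgsym x (πm ⁅X δ, y⁆), t2, add_zero]
        have hz1 : g (U x y) (X δ) = 0 := by
          have := mul_eq_zero.mp this
          rcases this with h | h
          · exact absurd h two_ne_zero
          · exact h
        rw [hz0, hz1]
    | zero => simp
    | add a b _ _ ha hb => rw [map_add, map_add, ha, hb]
    | smul c a _ ha => rw [map_smul, map_smul, ha]
  have hsub : U x y - U' x y = 0 := by
    apply hgnd _ (sub_mem (hUmem x y) (hNM (hU'mem x y))) hdz
  have heq : U x y = U' x y := sub_eq_zero.mp hsub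
  exact ⟨heq ▸ hU'mem x y, heq⟩
end

section
/- The algebraic second fundamental form of the flag submanifold vanishes: for all X, Y ∈ 𝔫^ℂ, −(1/2) π_𝔪[X, Y] + U(X, Y) = −(1/2) π_𝔫[X, Y] + U'(X, Y). (Hence the holomorphic flag submanifold is totally geodesic with respect to every invariant metric.) -/
/- STATEMENT 15:
The algebraic second fundamental form of the flag submanifold vanishes: for
all X, Y ∈ 𝔫^ℂ, −(1/2) π_𝔪[X, Y] + U(X, Y) = −(1/2) π_𝔫[X, Y] + U'(X, Y).
(Hence the holomorphic flag submanifold is totally geodesic with respect to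
every invariant metric.)

Context: Weyl basis {X_α, H_α}; Θ ⊆ Σ, R(Θ) = ⟨Θ⟩ ∩ R, R_Θ = R ∖ R(Θ)
(here `RΘc`), 𝔪^ℂ = ⨁_{α∈R_Θ} 𝔤_α with projection π_𝔪; metric data λ, g
(nondegenerate on 𝔪^ℂ); U the unique symmetric bilinear map on 𝔪^ℂ with
2 g(U(X,Y), Z) = g(π_𝔪[Z,X], Y) + g(X, π_𝔪[Z,Y]).  For Θ' ⊆ Σ with Θ' ⊄ Θ,
R' = ⟨Θ'⟩ ∩ R, 𝔫^ℂ = ⨁_{γ∈R'∖R(Θ)} 𝔤_γ ⊆ 𝔪^ℂ with projection π_𝔫, and U'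
the unique symmetric bilinear map on 𝔫^ℂ with
2 g(U'(X,Y), Z) = g(π_𝔫[Z,X], Y) + g(X, π_𝔫[Z,Y]) (g restricted to 𝔫^ℂ is
nondegenerate). -/
theorem stmt15
    (L : Type*) [LieRing L] [LieAlgebra ℂ L]
    (V : Type*) [AddCommGroup V] [DecidableEq V]
    (R : Finset V) (hR0 : (0 : V) ∉ R) (hRneg : ∀ α ∈ R, -α ∈ R)
    (Rpos : Finset V) (hposR : Rpos ⊆ R)
    (hposneg : ∀ α ∈ R, α ∈ Rpos ↔ -α ∉ Rpos)
    (Sig : Finset V) (hSigpos : Sig ⊆ Rpos)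
    (Θ : Finset V) (hΘSig : Θ ⊆ Sig)
    (RΘ : Finset V)
    (hRΘ : ∀ α, α ∈ RΘ ↔ α ∈ R ∧ α ∈ AddSubgroup.closure (Θ : Set V))
    (RΘc : Finset V) (hRΘc : ∀ α, α ∈ RΘc ↔ α ∈ R ∧ α ∉ RΘ)
    (X H : V → L) (n : V → V → ℝ)
    (hbH : ∀ α ∈ R, ⁅X α, X (-α)⁆ = H α)
    (hbR : ∀ α ∈ R, ∀ β ∈ R, α + β ∈ R → ⁅X α, X β⁆ = (n α β : ℂ) • X (α + β))
    (hb0 : ∀ α ∈ R, ∀ β ∈ R, α + β ∉ R → α + β ≠ 0 → ⁅X α, X β⁆ = (0 : L))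
    (hn1 : ∀ α β : V, n α β = - n β α)
    (hn2 : ∀ α β : V, n α β = - n (-α) (-β))
    (hn3 : ∀ α β γ : V, α + β + γ = 0 → n α β = n β γ ∧ n β γ = n γ α)
    (πm : L →ₗ[ℂ] L)
    (hπm1 : ∀ α ∈ RΘc, πm (X α) = X α)
    (hπm2 : ∀ α ∈ RΘ, πm (X α) = 0)
    (hπm3 : ∀ α ∈ R, πm (H α) = 0)
    (lam : V → ℝ) (hlam1 : ∀ α ∈ RΘc, 0 < lam α) (hlam2 : ∀ α : V, lam (-α) = lam α)
    (g : L →ₗ[ℂ] L →ₗ[ℂ] ℂ) (hgsym : ∀ x y : L, g x y = g y x)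
    (hg : ∀ α ∈ RΘc, ∀ β ∈ RΘc, g (X α) (X β) = if β = -α then (lam α : ℂ) else 0)
    (hgnd : ∀ x ∈ Submodule.span ℂ (X '' (RΘc : Set V)),
      (∀ z ∈ Submodule.span ℂ (X '' (RΘc : Set V)), g x z = 0) → x = 0)
    (U : L →ₗ[ℂ] L →ₗ[ℂ] L) (hUsym : ∀ x y : L, U x y = U y x)
    (hUmem : ∀ x y : L, U x y ∈ Submodule.span ℂ (X '' (RΘc : Set V)))
    (hU : ∀ x ∈ Submodule.span ℂ (X '' (RΘc : Set V)),
          ∀ y ∈ Submodule.span ℂ (X '' (RΘc : Set V)),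
          ∀ z ∈ Submodule.span ℂ (X '' (RΘc : Set V)),
      (2 : ℂ) * g (U x y) z = g (πm ⁅z, x⁆) y + g x (πm ⁅z, y⁆))
    (Θ' : Finset V) (hΘ'Sig : Θ' ⊆ Sig) (hΘ'Θ : ¬ Θ' ⊆ Θ)
    (R' : Finset V)
    (hR' : ∀ α, α ∈ R' ↔ α ∈ R ∧ α ∈ AddSubgroup.closure (Θ' : Set V))
    (R'c : Finset V) (hR'c : ∀ γ, γ ∈ R'c ↔ γ ∈ R' ∧ γ ∉ RΘ)
    (πn : L →ₗ[ℂ] L)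
    (hπn1 : ∀ γ ∈ R'c, πn (X γ) = X γ)
    (hπn2 : ∀ γ ∈ R, γ ∉ R'c → πn (X γ) = 0)
    (hπn3 : ∀ α ∈ R, πn (H α) = 0)
    (U' : L →ₗ[ℂ] L →ₗ[ℂ] L) (hU'sym : ∀ x y : L, U' x y = U' y x)
    (hU'mem : ∀ x y : L, U' x y ∈ Submodule.span ℂ (X '' (R'c : Set V)))
    (hU' : ∀ x ∈ Submodule.span ℂ (X '' (R'c : Set V)),
           ∀ y ∈ Submodule.span ℂ (X '' (R'c : Set V)),
           ∀ z ∈ Submodule.span ℂ (X '' (R'c : Set V)),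
      (2 : ℂ) * g (U' x y) z = g (πn ⁅z, x⁆) y + g x (πn ⁅z, y⁆))
    (hgnd' : ∀ x ∈ Submodule.span ℂ (X '' (R'c : Set V)),
      (∀ z ∈ Submodule.span ℂ (X '' (R'c : Set V)), g x z = 0) → x = 0)
    :
    ∀ x ∈ Submodule.span ℂ (X '' (R'c : Set V)),
      ∀ y ∈ Submodule.span ℂ (X '' (R'c : Set V)),
        -(1/2 : ℂ) • πm ⁅x, y⁆ + U x y = -(1/2 : ℂ) • πn ⁅x, y⁆ + U' x y := by
  classical
  -- basic facts
  have hR'cR : ∀ δ ∈ R'c, δ ∈ R := fun δ hδ => ((hR' δ).mp ((hR'c δ).mp hδ).1).1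
  have hR'cRΘc : ∀ δ ∈ R'c, δ ∈ RΘc := fun δ hδ =>
    (hRΘc δ).mpr ⟨hR'cR δ hδ, ((hR'c δ).mp hδ).2⟩
  have hRΘcR : ∀ δ ∈ RΘc, δ ∈ R := fun δ hδ => ((hRΘc δ).mp hδ).1
  have hnotRΘneg : ∀ δ ∈ R, δ ∉ RΘ → -δ ∉ RΘ := by
    intro δ hδR hδ hcon
    exact hδ ((hRΘ δ).mpr ⟨hδR, by simpa using neg_mem ((hRΘ (-δ)).mp hcon).2⟩)
  have hR'cneg : ∀ δ ∈ R'c, -δ ∈ R'c := by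
    intro δ hδ
    obtain ⟨hδ1, hδ2⟩ := (hR'c δ).mp hδ
    obtain ⟨hδR, hδcl⟩ := (hR' δ).mp hδ1
    exact (hR'c (-δ)).mpr ⟨(hR' (-δ)).mpr ⟨hRneg δ hδR, neg_mem hδcl⟩,
      hnotRΘneg δ hδR hδ2⟩
  have hclR' : ∀ δ ∈ R'c, δ ∈ AddSubgroup.closure (Θ' : Set V) := fun δ hδ =>
    ((hR' δ).mp ((hR'c δ).mp hδ).1).2
  -- membership helpers
  set Sm := Submodule.span ℂ (X '' (RΘc : Set V)) with hSm
  set Sn := Submodule.span ℂ (X '' (R'c : Set V)) with hSn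
  have hmemm : ∀ δ ∈ RΘc, X δ ∈ Sm := fun δ hδ =>
    Submodule.subset_span ⟨δ, by simpa using hδ, rfl⟩
  have hmemn : ∀ δ ∈ R'c, X δ ∈ Sn := fun δ hδ =>
    Submodule.subset_span ⟨δ, by simpa using hδ, rfl⟩
  have hSnSm : Sn ≤ Sm := by
    apply Submodule.span_mono
    rintro _ ⟨δ, hδ, rfl⟩
    exact ⟨δ, by simpa using hR'cRΘc δ (by simpa using hδ), rfl⟩
  -- key lemma: the two projections agree on brackets of basis elements of 𝔫
  have pimn : ∀ α ∈ R'c, ∀ β ∈ R'c, πm ⁅X α, X β⁆ = πn ⁅X α, X β⁆ := by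
    intro α hα β hβ
    have hαR := hR'cR α hα
    have hβR := hR'cR β hβ
    by_cases hb : β = -α
    · subst hb
      rw [hbH α hαR, hπm3 α hαR, hπn3 α hαR]
    · by_cases hs : α + β ∈ R
      · rw [hbR α hαR β hβR hs, map_smul, map_smul]
        have hcl : α + β ∈ AddSubgroup.closure (Θ' : Set V) :=
          add_mem (hclR' α hα) (hclR' β hβ)
        by_cases ht : α + β ∈ RΘ
        · rw [hπm2 _ ht, hπn2 _ hs (fun hc => ((hR'c _).mp hc).2 ht)]
        · rw [hπm1 _ ((hRΘc _).mpr ⟨hs, ht⟩),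
            hπn1 _ ((hR'c _).mpr ⟨(hR' _).mpr ⟨hs, hcl⟩, ht⟩)]
      · have hne : α + β ≠ 0 := fun h => hb (eq_neg_of_add_eq_zero_right h)
        rw [hb0 α hαR β hβR hs hne, map_zero, map_zero]
  -- g (πm ⁅X γ, X α⁆) (X β) = 0 when γ ∈ RΘc \ R'c and α, β ∈ R'c
  have rhszero : ∀ γ ∈ RΘc, γ ∉ R'c → ∀ α ∈ R'c, ∀ β ∈ R'c,
      g (πm ⁅X γ, X α⁆) (X β) = 0 := by
    intro γ hγ hγn α hα β hβ
    have hγR := hRΘcR γ hγ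
    have hαR := hR'cR α hα
    by_cases hb : α = -γ
    · subst hb
      rw [hbH γ hγR, hπm3 γ hγR, map_zero, LinearMap.zero_apply]
    · by_cases hs : γ + α ∈ R
      · rw [hbR γ hγR α hαR hs, map_smul, map_smul, LinearMap.smul_apply]
        by_cases ht : γ + α ∈ RΘ
        · rw [hπm2 _ ht, map_zero, LinearMap.zero_apply, smul_zero]
        · rw [hπm1 _ ((hRΘc _).mpr ⟨hs, ht⟩),
            hg _ ((hRΘc _).mpr ⟨hs, ht⟩) β (hR'cRΘc β hβ)]
          have : β ≠ -(γ + α) := by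
            intro hc
            apply hγn
            have hγeq : γ = -β - α := by
              have := hc
              rw [neg_add] at this
              rw [this]; abel
            have hγcl : γ ∈ AddSubgroup.closure (Θ' : Set V) := by
              rw [hγeq]
              exact sub_mem (neg_mem (hclR' β hβ)) (hclR' α hα)
            exact (hR'c γ).mpr ⟨(hR' γ).mpr ⟨hγR, hγcl⟩, ((hRΘc γ).mp hγ).2⟩
          rw [if_neg this, smul_zero]
      · have hne : γ + α ≠ 0 := fun h => hb (eq_neg_of_add_eq_zero_right h)
        rw [hb0 γ hγR α hαR hs hne, map_zero, map_zero, LinearMap.zero_apply]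
  -- g w (X γ) = 0 for w ∈ Sn and γ ∈ RΘc \ R'c
  have gz : ∀ γ ∈ RΘc, γ ∉ R'c → ∀ w ∈ Sn, g w (X γ) = 0 := by
    intro γ hγ hγn w hw
    induction hw using Submodule.span_induction with
    | mem w hw =>
      obtain ⟨δ, hδ, rfl⟩ := hw
      have hδ' : δ ∈ R'c := by simpa using hδ
      rw [hg δ (hR'cRΘc δ hδ') γ hγ]
      have : γ ≠ -δ := fun hc => hγn (hc ▸ hR'cneg δ hδ')
      rw [if_neg this]
    | zero => simp
    | add x y hx hy ihx ihy => simp [ihx, ihy]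
    | smul a x hx ihx => simp [ihx]
  -- U and U' agree on basis elements of 𝔫
  have Ueqb : ∀ α ∈ R'c, ∀ β ∈ R'c, U (X α) (X β) = U' (X α) (X β) := by
    intro α hα β hβ
    have hαm := hmemm α (hR'cRΘc α hα)
    have hβm := hmemm β (hR'cRΘc β hβ)
    have hαn := hmemn α hα
    have hβn := hmemn β hβ
    have key : ∀ z ∈ Sm, g (U (X α) (X β)) z = g (U' (X α) (X β)) z := by
      intro z hz
      induction hz using Submodule.span_induction with
      | mem z hz =>
        obtain ⟨γ, hγ, rfl⟩ := hz
        have hγ' : γ ∈ RΘc := by simpa using hγ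
        have h1 := hU (X α) hαm (X β) hβm (X γ) (hmemm γ hγ')
        by_cases hγn : γ ∈ R'c
        · have h2 := hU' (X α) hαn (X β) hβn (X γ) (hmemn γ hγn)
          rw [pimn γ hγn α hα, pimn γ hγn β hβ] at h1
          exact mul_left_cancel₀ two_ne_zero (h1.trans h2.symm)
        · have hz1 : g (πm ⁅X γ, X α⁆) (X β) = 0 := rhszero γ hγ' hγn α hα β hβ
          have hz2 : g (X α) (πm ⁅X γ, X β⁆) = 0 := by
            rw [hgsym]; exact rhszero γ hγ' hγn β hβ α hα
          rw [hz1, hz2, add_zero] at h1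
          have hU0 : g (U (X α) (X β)) (X γ) = 0 :=
            (mul_eq_zero.mp h1).resolve_left two_ne_zero
          rw [hU0, gz γ hγ' hγn _ (hU'mem (X α) (X β))]
      | zero => simp
      | add x y hx hy ihx ihy => simp [ihx, ihy]
      | smul a x hx ihx => simp [ihx]
    have hmem : U (X α) (X β) - U' (X α) (X β) ∈ Sm :=
      sub_mem (hUmem _ _) (hSnSm (hU'mem _ _))
    have := hgnd _ hmem (fun z hz => by
      rw [map_sub, LinearMap.sub_apply, key z hz, sub_self])
    exact sub_eq_zero.mp this
  -- conclude by bilinearity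
  intro x hx y hy
  induction hx, hy using Submodule.span_induction₂ with
  | mem_mem x y hx hy =>
    obtain ⟨α, hα, rfl⟩ := hx
    obtain ⟨β, hβ, rfl⟩ := hy
    have hα' : α ∈ R'c := by simpa using hα
    have hβ' : β ∈ R'c := by simpa using hβ
    rw [pimn α hα' β hβ', Ueqb α hα' β hβ']
  | zero_left y hy => simp
  | zero_right x hx => simp
  | add_left x y z hx hy hz ih1 ih2 =>
    simp only [add_lie, map_add, LinearMap.add_apply, smul_add] at *
    rw [add_add_add_comm, ih1, ih2, add_add_add_comm]
  | add_right x y z hx hy hz ih1 ih2 =>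
    simp only [lie_add, map_add, LinearMap.add_apply, smul_add] at *
    rw [add_add_add_comm, ih1, ih2, add_add_add_comm]
  | smul_left r x y hx hy ih =>
    simp only [smul_lie, map_smul, LinearMap.smul_apply] at *
    rw [smul_comm (-(1/2:ℂ)) r, ← smul_add, ih, smul_add, smul_comm]
  | smul_right r x y hx hy ih =>
    simp only [lie_smul, map_smul, LinearMap.smul_apply] at *
    rw [smul_comm (-(1/2:ℂ)) r, ← smul_add, ih, smul_add, smul_comm]
end

section
/- For every subset S ⊆ R_Θ⁺ and every X ∈ 𝔪^ℂ, the partial codifferential Σ_{β ∈ S} [ (∇_{V_β} Ω)(V_β, X) + (∇_{J V_β} Ω)(J V_β, X) ] vanishes; in particular, for a holomorphic submanifold whose normal space is spanned by {V_α, J V_α : α ∈ R_Θ⁺ ∖ S}, the normal-codifferential 𝛿̄̄Ω and the tangent codifferential 𝛿̄Ω both vanish on 𝔪^ℂ, so the submanifold is almost semi-Kähler and minimal. -/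
/- STATEMENT 16:
For every subset S ⊆ R_Θ⁺ and every X ∈ 𝔪^ℂ, the partial codifferential
Σ_{β ∈ S} [ (∇_{V_β} Ω)(V_β, X) + (∇_{J V_β} Ω)(J V_β, X) ] vanishes; in
particular, for a holomorphic submanifold whose normal space is spanned by
{V_α, J V_α : α ∈ R_Θ⁺ ∖ S}, the normal-codifferential 𝛿̄̄Ω (the sum over
R_Θ⁺ ∖ S) and the tangent codifferential 𝛿̄Ω (the sum over S) both vanish on
𝔪^ℂ, so the submanifold is almost semi-Kähler and minimal.

Context: the invariant almost Hermitian flag manifold setup: Weyl basis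
{X_α, H_α} with structure constants n_{α,β}; Θ ⊆ Σ, R(Θ) = ⟨Θ⟩ ∩ R,
R_Θ = R ∖ R(Θ) (here `RΘc`), R_Θ⁺ = R_Θ ∩ R⁺ (here `Rcpos`);
𝔪^ℂ = ⨁_{α∈R_Θ} 𝔤_α with projection π_𝔪; metric data λ, g; U and
∇(X,Y) = −(1/2) π_𝔪[X,Y] + U(X,Y); invariant almost complex structure
J X_α = i ε_α X_α; V_α = (X_α − X_{−α})/√(2λ_α);
Ω(X,Y) = g(X, JY) and (∇_X Ω)(Y,Z) = g(Y, ∇(X, JZ) − J ∇(X, Z)). -/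
theorem stmt16
    (L : Type*) [LieRing L] [LieAlgebra ℂ L]
    (V : Type*) [AddCommGroup V] [DecidableEq V]
    (R : Finset V) (hR0 : (0 : V) ∉ R) (hRneg : ∀ α ∈ R, -α ∈ R)
    (Rpos : Finset V) (hposR : Rpos ⊆ R)
    (hposneg : ∀ α ∈ R, α ∈ Rpos ↔ -α ∉ Rpos)
    (Sig : Finset V) (hSigpos : Sig ⊆ Rpos)
    (Θ : Finset V) (hΘSig : Θ ⊆ Sig)
    (RΘ : Finset V)
    (hRΘ : ∀ α, α ∈ RΘ ↔ α ∈ R ∧ α ∈ AddSubgroup.closure (Θ : Set V))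
    (RΘc : Finset V) (hRΘc : ∀ α, α ∈ RΘc ↔ α ∈ R ∧ α ∉ RΘ)
    (X H : V → L) (n : V → V → ℝ)
    (hbH : ∀ α ∈ R, ⁅X α, X (-α)⁆ = H α)
    (hbR : ∀ α ∈ R, ∀ β ∈ R, α + β ∈ R → ⁅X α, X β⁆ = (n α β : ℂ) • X (α + β))
    (hb0 : ∀ α ∈ R, ∀ β ∈ R, α + β ∉ R → α + β ≠ 0 → ⁅X α, X β⁆ = (0 : L))
    (hn1 : ∀ α β : V, n α β = - n β α)
    (hn2 : ∀ α β : V, n α β = - n (-α) (-β))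
    (hn3 : ∀ α β γ : V, α + β + γ = 0 → n α β = n β γ ∧ n β γ = n γ α)
    (πm : L →ₗ[ℂ] L)
    (hπm1 : ∀ α ∈ RΘc, πm (X α) = X α)
    (hπm2 : ∀ α ∈ RΘ, πm (X α) = 0)
    (hπm3 : ∀ α ∈ R, πm (H α) = 0)
    (lam : V → ℝ) (hlam1 : ∀ α ∈ RΘc, 0 < lam α) (hlam2 : ∀ α : V, lam (-α) = lam α)
    (g : L →ₗ[ℂ] L →ₗ[ℂ] ℂ) (hgsym : ∀ x y : L, g x y = g y x)
    (hg : ∀ α ∈ RΘc, ∀ β ∈ RΘc, g (X α) (X β) = if β = -α then (lam α : ℂ) else 0)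
    (hgnd : ∀ x ∈ Submodule.span ℂ (X '' (RΘc : Set V)),
      (∀ z ∈ Submodule.span ℂ (X '' (RΘc : Set V)), g x z = 0) → x = 0)
    (U : L →ₗ[ℂ] L →ₗ[ℂ] L) (hUsym : ∀ x y : L, U x y = U y x)
    (hUmem : ∀ x y : L, U x y ∈ Submodule.span ℂ (X '' (RΘc : Set V)))
    (hU : ∀ x ∈ Submodule.span ℂ (X '' (RΘc : Set V)),
          ∀ y ∈ Submodule.span ℂ (X '' (RΘc : Set V)),
          ∀ z ∈ Submodule.span ℂ (X '' (RΘc : Set V)),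
      (2 : ℂ) * g (U x y) z = g (πm ⁅z, x⁆) y + g x (πm ⁅z, y⁆))
    (eps : V → ℝ) (heps1 : ∀ α ∈ RΘc, eps α = 1 ∨ eps α = -1)
    (heps2 : ∀ α : V, eps (-α) = - eps α)
    (J : L →ₗ[ℂ] L)
    (hJ : ∀ α ∈ RΘc, J (X α) = (Complex.I * (eps α : ℂ)) • X α)
    (nab : L → L → L)
    (hnab : ∀ x y : L, nab x y = -(1/2 : ℂ) • πm ⁅x, y⁆ + U x y)
    (covOm : L → L → L → ℂ)
    (hcovOm : ∀ x y z : L, covOm x y z = g y (nab x (J z) - J (nab x z)))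
    (Rcpos : Finset V) (hRcpos : ∀ α, α ∈ Rcpos ↔ α ∈ RΘc ∧ α ∈ Rpos)
    (Vv : V → L)
    (hVv : ∀ α : V, Vv α = (((Real.sqrt (2 * lam α))⁻¹ : ℝ) : ℂ) • (X α - X (-α)))
    :
    ∀ S : Finset V, S ⊆ Rcpos →
      ∀ x ∈ Submodule.span ℂ (X '' (RΘc : Set V)),
        (∑ β ∈ S,
          (covOm (Vv β) (Vv β) x + covOm (J (Vv β)) (J (Vv β)) x) = 0) ∧
        (∑ β ∈ Rcpos \ S,
          (covOm (Vv β) (Vv β) x + covOm (J (Vv β)) (J (Vv β)) x) = 0) := by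
  intro S hS x hx
  set M := Submodule.span ℂ (X '' (RΘc : Set V)) with hMdef
  have hXmem : ∀ α ∈ RΘc, X α ∈ M := fun α hα => Submodule.subset_span ⟨α, hα, rfl⟩
  have hnegc : ∀ α ∈ RΘc, -α ∈ RΘc := by
    intro α hα
    obtain ⟨h1, h2⟩ := (hRΘc α).1 hα
    refine (hRΘc (-α)).2 ⟨hRneg α h1, fun hm => h2 ?_⟩
    obtain ⟨h3, h4⟩ := (hRΘ (-α)).1 hm
    exact (hRΘ α).2 ⟨h1, by simpa using neg_mem h4⟩
  -- base case: πm of a bracket of basis vectors lies in M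
  have hbase : ∀ α ∈ RΘc, ∀ γ ∈ RΘc, πm ⁅X α, X γ⁆ ∈ M := by
    intro α hα γ hγ
    have hαR := ((hRΘc α).1 hα).1
    have hγR := ((hRΘc γ).1 hγ).1
    by_cases h0 : α + γ = 0
    · have hγα : γ = -α := eq_neg_of_add_eq_zero_right h0
      rw [hγα, hbH α hαR, hπm3 α hαR]
      exact zero_mem _
    · by_cases hmem : α + γ ∈ R
      · rw [hbR α hαR γ hγR hmem, map_smul]
        by_cases hc : α + γ ∈ RΘc
        · rw [hπm1 _ hc]; exact Submodule.smul_mem _ _ (hXmem _ hc)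
        · have hΘm : α + γ ∈ RΘ := by
            by_contra h; exact hc ((hRΘc _).2 ⟨hmem, h⟩)
          rw [hπm2 _ hΘm, smul_zero]; exact zero_mem _
      · rw [hb0 α hαR γ hγR hmem h0, map_zero]; exact zero_mem _
  -- πm of brackets of elements of M lies in M
  have hEm : ∀ u ∈ M, ∀ v ∈ M, πm ⁅u, v⁆ ∈ M := by
    intro u hu
    induction hu using Submodule.span_induction with
    | mem u hu' =>
      obtain ⟨α, hα, rfl⟩ := hu'
      intro v hv
      induction hv using Submodule.span_induction with
      | mem v hv' => obtain ⟨γ, hγ, rfl⟩ := hv'; exact hbase α hα γ hγ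
      | zero => simp
      | add y z hy hz ihy ihz => rw [lie_add, map_add]; exact add_mem ihy ihz
      | smul r y hy ihy => rw [lie_smul, map_smul]; exact Submodule.smul_mem _ _ ihy
    | zero => intro v hv; simp
    | add y z hy hz ihy ihz =>
      intro v hv; rw [add_lie, map_add]; exact add_mem (ihy v hv) (ihz v hv)
    | smul r y hy ihy =>
      intro v hv; rw [smul_lie, map_smul]; exact Submodule.smul_mem _ _ (ihy v hv)
  -- J maps M to M
  have hJM : ∀ v ∈ M, J v ∈ M := by
    intro v hv
    induction hv using Submodule.span_induction with
    | mem v hv' =>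
      obtain ⟨α, hα, rfl⟩ := hv'
      rw [hJ α hα]; exact Submodule.smul_mem _ _ (hXmem α hα)
    | zero => simp
    | add y z hy hz ihy ihz => rw [map_add]; exact add_mem ihy ihz
    | smul r y hy ihy => rw [map_smul]; exact Submodule.smul_mem _ _ ihy
  -- J is skew with respect to g on M
  have hbaseJ : ∀ α ∈ RΘc, ∀ γ ∈ RΘc, g (X α) (J (X γ)) = - g (J (X α)) (X γ) := by
    intro α hα γ hγ
    rw [hJ α hα, hJ γ hγ, map_smul, map_smul, LinearMap.smul_apply,
      hg α hα γ hγ, smul_eq_mul, smul_eq_mul]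
    by_cases h : γ = -α
    · subst h
      rw [heps2 α]
      push_cast
      ring_nf
    · simp [h]
  have hskew : ∀ u ∈ M, ∀ v ∈ M, g u (J v) = - g (J u) v := by
    intro u hu
    induction hu using Submodule.span_induction with
    | mem u hu' =>
      obtain ⟨α, hα, rfl⟩ := hu'
      intro v hv
      induction hv using Submodule.span_induction with
      | mem v hv' => obtain ⟨γ, hγ, rfl⟩ := hv'; exact hbaseJ α hα γ hγ
      | zero => simp
      | add y z hy hz ihy ihz => rw [map_add, map_add, map_add, ihy, ihz]; ring
      | smul r y hy ihy =>
        rw [map_smul, map_smul, map_smul, smul_eq_mul, smul_eq_mul, ihy]; ring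
    | zero => intro v hv; simp
    | add y z hy hz ihy ihz =>
      intro v hv
      simp only [map_add, LinearMap.add_apply, ihy v hv, ihz v hv]
      ring
    | smul r y hy ihy =>
      intro v hv
      simp only [map_smul, LinearMap.smul_apply, smul_eq_mul, ihy v hv]
      ring
  -- key vanishing lemma D
  have hD : ∀ β ∈ RΘc, ∀ y ∈ M, g (X β) (πm ⁅X (-β), y⁆) = 0 := by
    intro β hβ y hy
    have hβR := ((hRΘc β).1 hβ).1
    have hnβ := hnegc β hβ
    have hnβR := ((hRΘc (-β)).1 hnβ).1
    induction hy using Submodule.span_induction with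
    | mem v hv =>
      obtain ⟨γ, hγ, rfl⟩ := hv
      have hγR := ((hRΘc γ).1 hγ).1
      have hγ0 : γ ≠ 0 := fun h => hR0 (h ▸ hγR)
      by_cases h0 : -β + γ = 0
      · have hγβ : γ = β := by
          have := eq_neg_of_add_eq_zero_right h0
          rw [this, neg_neg]
        have hXγ : X γ = X (- - β) := by rw [hγβ, neg_neg]
        rw [hXγ, hbH (-β) hnβR, hπm3 (-β) hnβR, map_zero]
      · by_cases hmem : -β + γ ∈ R
        · rw [hbR (-β) hnβR γ hγR hmem, map_smul, map_smul, smul_eq_mul]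
          by_cases hc : -β + γ ∈ RΘc
          · rw [hπm1 _ hc, hg β hβ _ hc]
            have hne : ¬ (-β + γ = -β) := by
              intro h
              exact hγ0 (by simpa using h)
            rw [if_neg hne, mul_zero]
          · have hΘm : -β + γ ∈ RΘ := by
              by_contra h; exact hc ((hRΘc _).2 ⟨hmem, h⟩)
            rw [hπm2 _ hΘm, map_zero, mul_zero]
        · rw [hb0 (-β) hnβR γ hγR hmem h0, map_zero, map_zero]
    | zero => simp
    | add y z hy hz ihy ihz => rw [lie_add, map_add, map_add, ihy, ihz, add_zero]
    | smul r y hy ihy => rw [lie_smul, map_smul, map_smul, ihy, smul_zero]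
  -- g W (nab W z) = 0
  have hA0 : ∀ W ∈ M, ∀ z ∈ M, g W (nab W z) = 0 := by
    intro W hW z hz
    have h2 := hU W hW z hz W hW
    rw [lie_self, map_zero, map_zero, LinearMap.zero_apply, zero_add] at h2
    rw [hnab, map_add, map_smul, smul_eq_mul, hgsym W (U W z)]
    linear_combination (1/2 : ℂ) * h2
  have hnabM : ∀ u ∈ M, ∀ w ∈ M, nab u w ∈ M := by
    intro u hu w hw
    rw [hnab]
    exact add_mem (Submodule.smul_mem _ _ (hEm u hu w hw)) (hUmem u w)
  have hcross : ∀ u ∈ M, covOm u u x = - g u (J (nab u x)) := by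
    intro u hu
    rw [hcovOm, map_sub, hA0 u hu (J x) (hJM x hx), zero_sub]
  -- covOm u u x = 0 under suitable hypotheses
  have hcov : ∀ (u v : L) (e : ℂ), u ∈ M → v ∈ M → J u = e • v → πm ⁅v, u⁆ = 0 →
      g u (πm ⁅v, x⁆) = g v (πm ⁅u, x⁆) → covOm u u x = 0 := by
    intro u v e hu hv hJu hbr hcr
    have h2 := hU u hu x hx v hv
    rw [hbr, map_zero, LinearMap.zero_apply, zero_add, hcr] at h2
    -- h2 : 2 * g (U u x) v = g v (πm ⁅u, x⁆)
    rw [hcross u hu, hskew u hu _ (hnabM u hu x hx), neg_neg, hJu, map_smul,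
      LinearMap.smul_apply, smul_eq_mul, hnab, map_add, map_smul, smul_eq_mul,
      hgsym v (U u x)]
    linear_combination (e / 2) * h2
  -- key pointwise lemma
  have key : ∀ β ∈ Rcpos, covOm (Vv β) (Vv β) x + covOm (J (Vv β)) (J (Vv β)) x = 0 := by
    intro β hβ
    have hβc : β ∈ RΘc := ((hRcpos β).1 hβ).1
    have hnβc : -β ∈ RΘc := hnegc β hβc
    have hβR := ((hRΘc β).1 hβc).1
    set a := X β with ha_def
    set b := X (-β) with hb_def
    have ha : a ∈ M := hXmem β hβc
    have hb : b ∈ M := hXmem (-β) hnβc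
    have hAm : a - b ∈ M := sub_mem ha hb
    have hSm : a + b ∈ M := add_mem ha hb
    set e : ℂ := Complex.I * ((eps β : ℝ) : ℂ) with he_def
    have hJa : J a = e • a := hJ β hβc
    have hJb : J b = (-e) • b := by
      rw [hb_def, hJ (-β) hnβc, heps2 β]
      congr 1
      push_cast
      ring
    have hJA : J (a - b) = e • (a + b) := by
      rw [map_sub, hJa, hJb, neg_smul, sub_neg_eq_add, smul_add]
    have hJS : J (a + b) = e • (a - b) := by
      rw [map_add, hJa, hJb, neg_smul, ← sub_eq_add_neg, smul_sub]
    have hab : ⁅a, b⁆ = H β := hbH β hβR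
    have hba : ⁅b, a⁆ = - H β := by rw [← lie_skew, hab]
    have hbSA : πm ⁅a + b, a - b⁆ = 0 := by
      have hexp : ⁅a + b, a - b⁆ = (-2 : ℂ) • H β := by
        rw [add_lie, lie_sub, lie_sub, lie_self, lie_self, hab, hba]
        module
      rw [hexp, map_smul, hπm3 β hβR, smul_zero]
    have hbAS : πm ⁅a - b, a + b⁆ = 0 := by
      have : ⁅a - b, a + b⁆ = - ⁅a + b, a - b⁆ := (lie_skew _ _).symm
      rw [this, map_neg, hbSA, neg_zero]
    have hDa : g a (πm ⁅b, x⁆) = 0 := hD β hβc x hx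
    have hDb : g b (πm ⁅a, x⁆) = 0 := by
      have h := hD (-β) hnβc x hx
      rwa [neg_neg] at h
    have hcrAS : g (a - b) (πm ⁅a + b, x⁆) = g (a + b) (πm ⁅a - b, x⁆) := by
      have e1 : πm ⁅a + b, x⁆ = πm ⁅a, x⁆ + πm ⁅b, x⁆ := by rw [add_lie, map_add]
      have e2 : πm ⁅a - b, x⁆ = πm ⁅a, x⁆ - πm ⁅b, x⁆ := by rw [sub_lie, map_sub]
      rw [e1, e2]
      simp only [map_add, map_sub, LinearMap.add_apply, LinearMap.sub_apply]
      linear_combination 2 * hDa - 2 * hDb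
    have hz1 : covOm (a - b) (a - b) x = 0 :=
      hcov (a - b) (a + b) e hAm hSm hJA hbSA hcrAS
    have hz2 : covOm (a + b) (a + b) x = 0 :=
      hcov (a + b) (a - b) e hSm hAm hJS hbAS hcrAS.symm
    -- scaling
    have hnabs : ∀ (r : ℂ) (u w : L), nab (r • u) w = r • nab u w := by
      intro r u w
      rw [hnab, hnab, smul_lie, map_smul, map_smul, LinearMap.smul_apply, smul_add,
        smul_comm]
    have covsmul : ∀ (r : ℂ) (u : L), covOm (r • u) (r • u) x = r ^ 2 * covOm u u x := by
      intro r u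
      have h1 : J (r • nab u x) = r • J (nab u x) := map_smul J r _
      rw [hcovOm, hcovOm, hnabs, hnabs, h1, ← smul_sub]
      simp only [map_smul, LinearMap.smul_apply, smul_eq_mul]
      ring
    set c : ℂ := (((Real.sqrt (2 * lam β))⁻¹ : ℝ) : ℂ) with hc_def
    have hVA : Vv β = c • (a - b) := hVv β
    have hJV : J (Vv β) = (c * e) • (a + b) := by
      rw [hVA, map_smul, hJA, smul_smul]
    rw [hJV, hVA, covsmul, covsmul, hz1, hz2]
    ring
  constructor
  · exact Finset.sum_eq_zero fun β hβ => key β (hS hβ)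
  · exact Finset.sum_eq_zero fun β hβ => key β (Finset.mem_sdiff.mp hβ).1
end
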